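/- arXiv:1710.01814 — 6 statements merged into one kernel-verified Lean document; each statement's English description precedes it below -/
import Mathlib

section
/- Let p(x) be a homogeneous polynomial of degree 2d in n variables that lies in the interior of the cone of sum-of-squares homogeneous polynomials of degree 2d. Then there exists a constant β > 0 such that for every matrix A ∈ ℝ^{n×n}, the polynomial β‖A‖₂^{2d} p(x) − p(Ax) is a sum of squares, where ‖A‖₂ is the spectral (Euclidean operator) norm. -/
open MvPolynomial

set_option synthInstance.maxHeartbeats 1000000
set_option maxHeartbeats 1000000

/-- A polynomial is a sum of squares. -/
def IsSos {n : ℕ} (p : MvPolynomial (Fin n) ℝ) : Prop :=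
  ∃ (M : ℕ) (q : Fin M → MvPolynomial (Fin n) ℝ), p = ∑ k, (q k) ^ 2

/-- The coefficient embedding of the (finite-dimensional) space of homogeneous
polynomials of degree `2d`, used to endow it with its natural topology. -/
def homogCoeffMap (n d2 : ℕ) :
    MvPolynomial.homogeneousSubmodule (Fin n) ℝ d2 → ((Fin n →₀ ℕ) → ℝ) :=
  fun p m => MvPolynomial.coeff m (p : MvPolynomial (Fin n) ℝ)

namespace SosAux

variable {n : ℕ}

noncomputable def subst (A : Matrix (Fin n) (Fin n) ℝ) : Fin n → MvPolynomial (Fin n) ℝ :=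
  fun i => ∑ j, C (A i j) * X j

lemma subst_homog (A : Matrix (Fin n) (Fin n) ℝ) (i : Fin n) : (subst A i).IsHomogeneous 1 := by
  apply IsHomogeneous.sum
  intro j _
  simpa using (isHomogeneous_C (Fin n) (A i j)).mul (isHomogeneous_X ℝ j)

lemma comp_homog {k : ℕ} {p : MvPolynomial (Fin n) ℝ} (hp : p.IsHomogeneous k)
    (A : Matrix (Fin n) (Fin n) ℝ) : (aeval (subst A) p).IsHomogeneous k := by
  simpa using hp.aeval (subst A) (subst_homog A)

lemma aeval_smul_homog {k : ℕ} {p : MvPolynomial (Fin n) ℝ} (hp : p.IsHomogeneous k)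
    (c : ℝ) (v : Fin n → MvPolynomial (Fin n) ℝ) :
    aeval (fun i => c • v i) p = c ^ k • aeval v p := by
  conv_lhs => rw [p.as_sum]
  conv_rhs => rw [p.as_sum]
  rw [map_sum, map_sum, Finset.smul_sum]
  refine Finset.sum_congr rfl fun u hu => ?_
  rw [aeval_monomial, aeval_monomial, Finsupp.prod, Finsupp.prod]
  have hdeg : ∑ i ∈ u.support, u i = k := by
    have := hp (mem_support_iff.mp hu)
    simpa [Finsupp.weight_apply, Finsupp.sum] using this
  simp_rw [smul_eq_C_mul, mul_pow, ← C_pow]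
  rw [Finset.prod_mul_distrib, ← map_prod, Finset.prod_pow_eq_pow_sum, hdeg]
  ring

lemma isSos_zero : IsSos (0 : MvPolynomial (Fin n) ℝ) := ⟨0, fun k => 0, by simp⟩

lemma IsSos.smul_nonneg {c : ℝ} (hc : 0 ≤ c) {p : MvPolynomial (Fin n) ℝ} (h : IsSos p) :
    IsSos (c • p) := by
  obtain ⟨M, q, rfl⟩ := h
  refine ⟨M, fun k => Real.sqrt c • q k, ?_⟩
  simp [smul_pow, Real.sq_sqrt hc, Finset.smul_sum]

lemma continuous_coeff_comp (p : MvPolynomial (Fin n) ℝ) (m : Fin n →₀ ℕ) :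
    Continuous (fun A : Matrix (Fin n) (Fin n) ℝ => coeff m (aeval (subst A) p)) := by
  induction p using MvPolynomial.induction_on generalizing m with
  | C a => simpa using continuous_const
  | add p q hp hq =>
      simp only [map_add, coeff_add]
      exact (hp m).add (hq m)
  | mul_X p i hp =>
      have key : ∀ A : Matrix (Fin n) (Fin n) ℝ, coeff m (aeval (subst A) (p * X i)) =
          ∑ j, A i j * (if j ∈ m.support then
            coeff (m - Finsupp.single j 1) (aeval (subst A) p) else 0) := by
        intro A
        rw [map_mul, aeval_X]
        show coeff m (aeval (subst A) p * ∑ j, C (A i j) * X j) = _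
        rw [Finset.mul_sum, coeff_sum]
        refine Finset.sum_congr rfl fun j _ => ?_
        rw [mul_left_comm, coeff_C_mul, coeff_mul_X']
      simp_rw [key]
      refine continuous_finset_sum _ fun j _ => ?_
      refine ((continuous_id.matrix_elem i j)).mul ?_
      by_cases hj : j ∈ m.support
      · simpa [hj] using hp (m - Finsupp.single j 1)
      · simpa [hj] using continuous_const

lemma compact_K :
    IsCompact {A : Matrix (Fin n) (Fin n) ℝ | ‖Matrix.toEuclideanCLM (𝕜 := ℝ) A‖ ≤ 1} := by
  classical
  set e := Matrix.toEuclideanCLM (𝕜 := ℝ) (n := Fin n)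
  have hset : {A : Matrix (Fin n) (Fin n) ℝ | ‖e A‖ ≤ 1} =
      (fun x : (EuclideanSpace ℝ (Fin n) →L[ℝ] EuclideanSpace ℝ (Fin n)) => e.symm x) ''
        Metric.closedBall 0 1 := by
    ext A
    constructor
    · intro hA
      exact ⟨e A, Metric.mem_closedBall.mpr (by rwa [dist_zero_right]), e.symm_apply_apply A⟩
    · rintro ⟨x, hx, rfl⟩
      show ‖e (e.symm x)‖ ≤ 1
      rw [e.apply_symm_apply, ← dist_zero_right]
      exact Metric.mem_closedBall.mp hx
  rw [hset]
  let L : (EuclideanSpace ℝ (Fin n) →L[ℝ] EuclideanSpace ℝ (Fin n)) →ₗ[ℝ]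
      Matrix (Fin n) (Fin n) ℝ :=
    { toFun := fun x => e.symm x, map_add' := fun x y => map_add _ x y,
      map_smul' := fun c x => map_smul e.symm c x }
  have hc : Continuous fun x => e.symm x := L.continuous_of_finiteDimensional
  exact (isCompact_closedBall 0 1).image hc

end SosAux

open SosAux

/-- If a homogeneous polynomial `p` of degree `2d` lies in the interior of the cone of
sums of squares (interior taken in the finite-dimensional vector space of homogeneous
degree-`2d` polynomials), then there is `β > 0` such that for every `A ∈ ℝ^{n×n}`,
`β ‖A‖₂^{2d} p(x) − p(Ax)` is a sum of squares, `‖A‖₂` being the Euclidean operator norm. -/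
theorem sos_interior_uniform_bound (n d : ℕ) (hd : 0 < d)
    (p : MvPolynomial.homogeneousSubmodule (Fin n) ℝ (2 * d))
    (hp : p ∈ @interior _ (TopologicalSpace.induced (homogCoeffMap n (2 * d)) inferInstance)
        {q : MvPolynomial.homogeneousSubmodule (Fin n) ℝ (2 * d) |
          IsSos (q : MvPolynomial (Fin n) ℝ)}) :
    ∃ β > (0 : ℝ), ∀ A : Matrix (Fin n) (Fin n) ℝ,
      IsSos ((β * ‖Matrix.toEuclideanCLM (𝕜 := ℝ) A‖ ^ (2 * d)) •
          (p : MvPolynomial (Fin n) ℝ) -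
        MvPolynomial.aeval (fun i => ∑ j, MvPolynomial.C (A i j) * MvPolynomial.X j)
          (p : MvPolynomial (Fin n) ℝ)) := by
  classical
  letI : TopologicalSpace (MvPolynomial.homogeneousSubmodule (Fin n) ℝ (2 * d)) :=
    TopologicalSpace.induced (homogCoeffMap n (2 * d)) inferInstance
  -- interior → neighborhood → basic box
  have hmem : {q : MvPolynomial.homogeneousSubmodule (Fin n) ℝ (2 * d) |
      IsSos (q : MvPolynomial (Fin n) ℝ)} ∈ nhds p := mem_interior_iff_mem_nhds.mp hp
  rw [nhds_induced, Filter.mem_comap] at hmem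
  obtain ⟨t, ht, hts⟩ := hmem
  rw [nhds_pi, Filter.mem_pi] at ht
  obtain ⟨I, hI, V, hV, hVt⟩ := ht
  choose ε hεpos hball using fun m => Metric.mem_nhds_iff.mp (hV m)
  -- uniform lower bound on ε over the finite set I
  obtain ⟨ε0, hε0, hε0le⟩ : ∃ ε0 > (0 : ℝ), ∀ m ∈ hI.toFinset, ε0 ≤ ε m := by
    rcases Finset.eq_empty_or_nonempty hI.toFinset with h | h
    · exact ⟨1, one_pos, by simp [h]⟩
    · refine ⟨hI.toFinset.inf' h ε, ?_, fun m hm => Finset.inf'_le ε hm⟩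
      exact (Finset.lt_inf'_iff h).mpr fun m _ => hεpos m
  -- bound coefficients of compositions on the unit ball
  set K : Set (Matrix (Fin n) (Fin n) ℝ) :=
    {A : Matrix (Fin n) (Fin n) ℝ | ‖Matrix.toEuclideanCLM (𝕜 := ℝ) A‖ ≤ 1} with hK
  have hKc : IsCompact K := compact_K
  have hbnd : ∀ m : Fin n →₀ ℕ, ∃ c : ℝ, ∀ A ∈ K,
      |coeff m (aeval (subst A) (p : MvPolynomial (Fin n) ℝ))| ≤ c := by
    intro m
    obtain ⟨c, hc⟩ := hKc.exists_bound_of_continuousOn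
      (continuous_coeff_comp (p : MvPolynomial (Fin n) ℝ) m).continuousOn
    exact ⟨c, fun A hA => by simpa using hc A hA⟩
  choose c hc using hbnd
  set Cb : ℝ := ∑ m ∈ hI.toFinset, |c m| with hCb
  have hCb0 : 0 ≤ Cb := Finset.sum_nonneg fun m _ => abs_nonneg _
  have hCble : ∀ m ∈ hI.toFinset, ∀ A ∈ K,
      |coeff m (aeval (subst A) (p : MvPolynomial (Fin n) ℝ))| ≤ Cb := by
    intro m hm A hA
    refine (hc m A hA).trans ((le_abs_self _).trans ?_)
    exact Finset.single_le_sum (fun m _ => abs_nonneg (c m)) hm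
  set β : ℝ := Cb / ε0 + 1 with hβ
  have hβpos : 0 < β := by positivity
  have hβb : Cb < β * ε0 := by
    rw [hβ, add_mul, div_mul_cancel₀ _ (ne_of_gt hε0), one_mul]
    linarith
  -- key claim: for B in the unit ball, β • p - p∘B is SOS
  have key : ∀ B ∈ K, IsSos (β • (p : MvPolynomial (Fin n) ℝ) -
      aeval (subst B) (p : MvPolynomial (Fin n) ℝ)) := by
    intro B hB
    have hqh : ((p : MvPolynomial (Fin n) ℝ) - β⁻¹ • aeval (subst B)
        (p : MvPolynomial (Fin n) ℝ)).IsHomogeneous (2 * d) := by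
      exact (p.2).sub (Submodule.smul_mem (MvPolynomial.homogeneousSubmodule (Fin n) ℝ (2*d))
        β⁻¹ (comp_homog p.2 B))
    set q : MvPolynomial.homogeneousSubmodule (Fin n) ℝ (2 * d) := ⟨_, hqh⟩ with hq
    have hqSos : IsSos (q : MvPolynomial (Fin n) ℝ) := by
      apply hts
      apply hVt
      intro m hm
      apply hball m
      have : homogCoeffMap n (2 * d) q m = homogCoeffMap n (2 * d) p m
          - β⁻¹ * coeff m (aeval (subst B) (p : MvPolynomial (Fin n) ℝ)) := by
        simp [homogCoeffMap, hq, coeff_smul, smul_eq_mul]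
      rw [Metric.mem_ball, Real.dist_eq, this]
      have h1 : |β⁻¹ * coeff m (aeval (subst B) (p : MvPolynomial (Fin n) ℝ))| ≤ β⁻¹ * Cb := by
        rw [abs_mul, abs_of_nonneg (by positivity : (0:ℝ) ≤ β⁻¹)]
        exact mul_le_mul_of_nonneg_left (hCble m (hI.mem_toFinset.mpr hm) B hB) (by positivity)
      have h2 : β⁻¹ * Cb < ε0 := by
        rw [inv_mul_lt_iff₀ hβpos]
        linarith [hβb]
      calc |homogCoeffMap n (2 * d) p m - β⁻¹ * coeff m (aeval (subst B) (p : MvPolynomial (Fin n) ℝ))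
            - homogCoeffMap n (2 * d) p m|
          = |β⁻¹ * coeff m (aeval (subst B) (p : MvPolynomial (Fin n) ℝ))| := by
            rw [sub_sub_cancel_left, abs_neg]
        _ < ε0 := lt_of_le_of_lt h1 h2
        _ ≤ ε m := hε0le m (hI.mem_toFinset.mpr hm)
    have : β • (q : MvPolynomial (Fin n) ℝ) = β • (p : MvPolynomial (Fin n) ℝ) -
        aeval (subst B) (p : MvPolynomial (Fin n) ℝ) := by
      rw [hq]
      show β • ((p : MvPolynomial (Fin n) ℝ) - β⁻¹ • _) = _
      rw [smul_sub, smul_smul, mul_inv_cancel₀ (ne_of_gt hβpos), one_smul]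
    rw [← this]
    exact IsSos.smul_nonneg (le_of_lt hβpos) hqSos
  refine ⟨β, hβpos, fun A => ?_⟩
  by_cases hA : A = 0
  · subst hA
    have h0 : (fun i : Fin n => ∑ j, MvPolynomial.C ((0 : Matrix (Fin n) (Fin n) ℝ) i j)
        * MvPolynomial.X j) = (fun _ => (0 : MvPolynomial (Fin n) ℝ)) := by
      funext i; simp
    rw [h0]
    have hnorm : ‖Matrix.toEuclideanCLM (𝕜 := ℝ) (0 : Matrix (Fin n) (Fin n) ℝ)‖ = 0 := by
      rw [map_zero, norm_zero]
    have haev : aeval (fun _ => (0 : MvPolynomial (Fin n) ℝ)) (p : MvPolynomial (Fin n) ℝ) = 0 := by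
      rw [MvPolynomial.aeval_zero']
      have : constantCoeff (p : MvPolynomial (Fin n) ℝ) = 0 := by
        have := (p.2).coeff_eq_zero (d := 0) (by simp; omega)
        rw [constantCoeff_eq]
        simpa using this
      rw [this, map_zero]
    rw [hnorm, haev]
    have : (0 : ℝ) ^ (2 * d) = 0 := by
      apply zero_pow
      omega
    rw [this, mul_zero, zero_smul, sub_zero]
    exact isSos_zero
  · set r : ℝ := ‖Matrix.toEuclideanCLM (𝕜 := ℝ) A‖ with hr
    have hr0 : 0 < r := by
      rw [hr, norm_pos_iff]
      intro h
      apply hA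
      have := congrArg (Matrix.toEuclideanCLM (𝕜 := ℝ) (n := Fin n)).symm h
      rwa [StarAlgEquiv.symm_apply_apply, map_zero] at this
    set B : Matrix (Fin n) (Fin n) ℝ := r⁻¹ • A with hB
    have hBK : B ∈ K := by
      show ‖Matrix.toEuclideanCLM (𝕜 := ℝ) B‖ ≤ 1
      rw [hB, map_smul, norm_smul r⁻¹ (Matrix.toEuclideanCLM (𝕜 := ℝ) A), norm_inv,
        Real.norm_eq_abs, abs_of_pos hr0, ← hr, inv_mul_cancel₀ (ne_of_gt hr0)]
    have hAB : A = r • B := by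
      rw [hB, smul_smul, mul_inv_cancel₀ (ne_of_gt hr0), one_smul]
    have hsubst : (fun i => ∑ j, MvPolynomial.C (A i j) * MvPolynomial.X j)
        = fun i => r • subst B i := by
      funext i
      show ∑ j, MvPolynomial.C (A i j) * MvPolynomial.X j =
        r • ∑ j, MvPolynomial.C (B i j) * MvPolynomial.X j
      rw [Finset.smul_sum]
      refine Finset.sum_congr rfl fun j _ => ?_
      rw [hAB]
      show MvPolynomial.C ((r • B) i j) * MvPolynomial.X j = _
      rw [Matrix.smul_apply, smul_eq_mul, map_mul, smul_eq_C_mul, mul_assoc]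
    rw [hsubst, aeval_smul_homog p.2 r (subst B)]
    have : (β * r ^ (2 * d)) • (p : MvPolynomial (Fin n) ℝ) -
        r ^ (2 * d) • aeval (subst B) (p : MvPolynomial (Fin n) ℝ) =
        r ^ (2 * d) • (β • (p : MvPolynomial (Fin n) ℝ) -
          aeval (subst B) (p : MvPolynomial (Fin n) ℝ)) := by
      rw [smul_sub, smul_smul, mul_comm]
    rw [this]
    exact IsSos.smul_nonneg (by positivity) (key B hBK)
end

section
/- Consider a finite set of matrices 𝒜 constrained by a strongly connected automaton G. Suppose there exist continuous functions f_v : ℝ^n → ℝ for each node v, each strictly positive on ℝ^n∖{0} and positively homogeneous of degree 1, such that f_v(A_σ x) ≤ γ f_u(x) for every arc (u,v,σ) of G and all x. Then for every G-admissible word (σ_1,...,σ_k), the product satisfies ‖A_{σ_k} ⋯ A_{σ_1}‖ ≤ (β/α) γ^k, where α = min_v inf_{‖x‖=1} f_v(x) and β = max_v sup_{‖x‖=1} f_v(x). Consequently the constrained joint spectral radius satisfies ρ(G,𝒜) ≤ γ. -/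
open Matrix

attribute [local instance] Matrix.linftyOpNormedAddCommGroup Matrix.linftyOpNormedRing

lemma cjsr_aux_norm_le_of_unit {n : ℕ} (M : Matrix (Fin n) (Fin n) ℝ) {c : ℝ} (hc : 0 ≤ c)
    (h : ∀ x : Fin n → ℝ, ‖x‖ = 1 → ‖M.mulVec x‖ ≤ c) : ‖M‖ ≤ c := by
  rw [Matrix.linfty_opNorm_eq_opNorm]
  refine ContinuousLinearMap.opNorm_le_bound _ hc fun x => ?_
  rcases eq_or_ne x 0 with rfl | hx
  · simp
  · have hxn : ‖x‖ ≠ 0 := norm_ne_zero_iff.mpr hx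
    have hu : ‖(‖x‖⁻¹ • x)‖ = 1 := norm_smul_inv_norm hx
    have hle := h _ hu
    have hmv : M.mulVec (‖x‖⁻¹ • x) = ‖x‖⁻¹ • M.mulVec x := Matrix.mulVec_smul _ _ _
    rw [hmv, norm_smul, norm_inv, norm_norm] at hle
    calc ‖(ContinuousLinearMap.mk (Matrix.mulVecLin M)) x‖ = ‖M.mulVec x‖ := rfl
      _ ≤ c * ‖x‖ := by
        rw [inv_mul_le_iff₀ (by positivity)] at hle
        linarith [hle]

/-- **Lyapunov certificate for the constrained joint spectral radius.**
Given a strongly connected automaton on node set `V` with arcs `E ⊆ V × V × [m]`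
labelled by matrices `A σ`, and continuous positively-1-homogeneous functions
`f v` strictly positive off the origin with `f v (A σ x) ≤ γ * f u x` for every arc
`(u, v, σ)`, every `G`-admissible product satisfies
`‖A_{σ_k} ⋯ A_{σ_1}‖ ≤ (β / α) γ ^ k` (with `α` the min over nodes of the inf of `f`
on the unit sphere, `β` the max of the sup), and consequently the constrained joint
spectral radius `lim_k max_{s admissible, |s| = k} ‖A_s‖^{1/k}` is at most `γ`. -/
theorem cjsr_lyapunov_certificate
    (n m : ℕ) (hn : 0 < n)
    {V : Type*} [Fintype V] [Nonempty V]
    (E : Set (V × V × Fin m))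
    (A : Fin m → Matrix (Fin n) (Fin n) ℝ)
    (hconn : ∀ u w : V, ∃ (k : ℕ) (_ : 0 < k) (vs : Fin (k + 1) → V) (σ : Fin k → Fin m),
      vs 0 = u ∧ vs (Fin.last k) = w ∧ ∀ i : Fin k, (vs i.castSucc, vs i.succ, σ i) ∈ E)
    (f : V → (Fin n → ℝ) → ℝ)
    (hcont : ∀ v, Continuous (f v))
    (hpos : ∀ v (x : Fin n → ℝ), x ≠ 0 → 0 < f v x)
    (hhom : ∀ v (c : ℝ), 0 ≤ c → ∀ x : Fin n → ℝ, f v (c • x) = c * f v x)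
    (γ : ℝ) (hγ : 0 ≤ γ)
    (hlyap : ∀ u v σ, (u, v, σ) ∈ E → ∀ x : Fin n → ℝ,
      f v ((A σ).mulVec x) ≤ γ * f u x) :
    (∀ (k : ℕ), 0 < k → ∀ (σ : Fin k → Fin m) (vs : Fin (k + 1) → V),
        (∀ i : Fin k, (vs i.castSucc, vs i.succ, σ i) ∈ E) →
        ‖((List.ofFn fun i => A (σ i)).reverse).prod‖ ≤
          (sSup {r : ℝ | ∃ (v : V) (x : Fin n → ℝ), ‖x‖ = 1 ∧ r = f v x} /
              sInf {r : ℝ | ∃ (v : V) (x : Fin n → ℝ), ‖x‖ = 1 ∧ r = f v x}) * γ ^ k) ∧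
      ∀ L : ℝ,
        Filter.Tendsto (fun k : ℕ =>
            sSup {r : ℝ | ∃ (σ : Fin k → Fin m) (vs : Fin (k + 1) → V),
              (∀ i : Fin k, (vs i.castSucc, vs i.succ, σ i) ∈ E) ∧
              r = ‖((List.ofFn fun i => A (σ i)).reverse).prod‖ ^ (1 / (k : ℝ))})
          Filter.atTop (nhds L) → L ≤ γ := by
  classical
  haveI : Nonempty (Fin n) := Fin.pos_iff_nonempty.mp hn
  set S : Set ℝ := {r : ℝ | ∃ (v : V) (x : Fin n → ℝ), ‖x‖ = 1 ∧ r = f v x} with hSdef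
  have he : ‖(fun _ => (1:ℝ) : Fin n → ℝ)‖ = 1 := by
    simpa using pi_norm_const (1 : ℝ) (ι := Fin n)
  have hSne : S.Nonempty :=
    ⟨f (Classical.arbitrary V) (fun _ => 1), Classical.arbitrary V, (fun _ => 1), he, rfl⟩
  have hsphne : (Metric.sphere (0 : Fin n → ℝ) 1).Nonempty :=
    ⟨(fun _ => 1), by simp [mem_sphere_iff_norm, he]⟩
  -- lower bound
  have hmin : ∀ v : V, ∃ x₀ : Fin n → ℝ, ‖x₀‖ = 1 ∧ ∀ x : Fin n → ℝ, ‖x‖ = 1 → f v x₀ ≤ f v x := by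
    intro v
    obtain ⟨x₀, hx₀, hm⟩ := (isCompact_sphere (0 : Fin n → ℝ) 1).exists_isMinOn
      hsphne ((hcont v).continuousOn)
    refine ⟨x₀, by simpa [mem_sphere_iff_norm] using hx₀,
      fun x hx => isMinOn_iff.mp hm x (by simp [mem_sphere_iff_norm, hx])⟩
  choose g hg1 hg2 using hmin
  set c : ℝ := Finset.univ.inf' Finset.univ_nonempty (fun v => f v (g v)) with hcdef
  have hc0 : 0 < c := by
    rw [hcdef, Finset.lt_inf'_iff]
    intro v _
    refine hpos v (g v) fun h => ?_
    have := hg1 v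
    rw [h] at this
    simp at this
  have hlow : ∀ r ∈ S, c ≤ r := by
    rintro r ⟨v, x, hx, rfl⟩
    exact (Finset.inf'_le _ (Finset.mem_univ v)).trans (hg2 v x hx)
  have hbddb : BddBelow S := ⟨c, hlow⟩
  have hα : 0 < sInf S := lt_of_lt_of_le hc0 (le_csInf hSne hlow)
  -- upper bound
  have hmax : ∀ v : V, ∃ x₀ : Fin n → ℝ, ∀ x : Fin n → ℝ, ‖x‖ = 1 → f v x ≤ f v x₀ := by
    intro v
    obtain ⟨x₀, _, hm⟩ := (isCompact_sphere (0 : Fin n → ℝ) 1).exists_isMaxOn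
      hsphne ((hcont v).continuousOn)
    exact ⟨x₀, fun x hx => isMaxOn_iff.mp hm x (by simp [mem_sphere_iff_norm, hx])⟩
  choose G hG using hmax
  have hup : ∀ r ∈ S, r ≤ Finset.univ.sup' Finset.univ_nonempty (fun v => f v (G v)) := by
    rintro r ⟨v, x, hx, rfl⟩
    exact (hG v x hx).trans (Finset.le_sup' (fun v => f v (G v)) (Finset.mem_univ v))
  have hbdda : BddAbove S := ⟨_, hup⟩
  have hαβ : sInf S ≤ sSup S := csInf_le_csSup hSne hbddb hbdda
  have hβ0 : 0 < sSup S := lt_of_lt_of_le hα hαβ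
  -- f bounded below by α * norm
  have hfl : ∀ (v : V) (y : Fin n → ℝ), sInf S * ‖y‖ ≤ f v y := by
    intro v y
    rcases eq_or_ne y 0 with rfl | hy
    · have h0 : f v 0 = 0 := by
        have := hhom v 0 le_rfl 0
        simpa using this
      simp [h0]
    · have hu : ‖(‖y‖⁻¹ • y)‖ = 1 := norm_smul_inv_norm hy
      have h1 : sInf S ≤ f v (‖y‖⁻¹ • y) := csInf_le hbddb ⟨v, _, hu, rfl⟩
      have h2 : f v y = ‖y‖ * f v (‖y‖⁻¹ • y) := by
        rw [← hhom v ‖y‖ (norm_nonneg y), smul_inv_smul₀ (norm_ne_zero_iff.mpr hy)]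
      calc sInf S * ‖y‖ = ‖y‖ * sInf S := mul_comm _ _
        _ ≤ ‖y‖ * f v (‖y‖⁻¹ • y) := mul_le_mul_of_nonneg_left h1 (norm_nonneg y)
        _ = f v y := h2.symm
  have hfu : ∀ (v : V) (x : Fin n → ℝ), ‖x‖ = 1 → f v x ≤ sSup S :=
    fun v x hx => le_csSup hbdda ⟨v, x, hx, rfl⟩
  -- key inductive Lyapunov estimate
  have key : ∀ (k : ℕ) (σ : Fin k → Fin m) (vs : Fin (k + 1) → V),
      (∀ i : Fin k, (vs i.castSucc, vs i.succ, σ i) ∈ E) → ∀ x : Fin n → ℝ,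
      f (vs (Fin.last k)) (((List.ofFn fun i => A (σ i)).reverse).prod.mulVec x)
        ≤ γ ^ k * f (vs 0) x := by
    intro k
    induction k with
    | zero =>
      intro σ vs _ x
      simp [Matrix.one_mulVec]
    | succ k ih =>
      intro σ vs harc x
      have hlist : (List.ofFn fun i : Fin (k + 1) => A (σ i))
          = (List.ofFn fun i : Fin k => A (σ i.castSucc)).concat (A (σ (Fin.last k))) :=
        List.ofFn_succ' _
      rw [hlist, List.concat_eq_append, List.reverse_append]
      simp only [List.reverse_singleton, List.singleton_append, List.prod_cons]
      rw [← Matrix.mulVec_mulVec]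
      have harc' := harc (Fin.last k)
      set P := ((List.ofFn fun i : Fin k => A (σ i.castSucc)).reverse).prod with hP
      have h1 := hlyap _ _ _ harc' (P.mulVec x)
      have h2 := ih (fun i => σ i.castSucc) (fun i => vs i.castSucc)
        (fun i => by have h := harc i.castSucc; rw [Fin.succ_castSucc] at h; exact h) x
      simp only [Fin.castSucc_zero] at h2
      have h3 : f ((vs (Fin.last k).succ)) ((A (σ (Fin.last k))).mulVec (P.mulVec x))
          ≤ γ * (γ ^ k * f (vs 0) x) :=
        h1.trans (mul_le_mul_of_nonneg_left h2 hγ)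
      rw [Fin.succ_last] at h3
      calc f (vs (Fin.last (k + 1))) ((A (σ (Fin.last k))).mulVec (P.mulVec x))
          ≤ γ * (γ ^ k * f (vs 0) x) := h3
        _ = γ ^ (k + 1) * f (vs 0) x := by ring
  -- Part 1
  have part1 : ∀ (k : ℕ), 0 < k → ∀ (σ : Fin k → Fin m) (vs : Fin (k + 1) → V),
      (∀ i : Fin k, (vs i.castSucc, vs i.succ, σ i) ∈ E) →
      ‖((List.ofFn fun i => A (σ i)).reverse).prod‖ ≤ (sSup S / sInf S) * γ ^ k := by
    intro k _ σ vs harc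
    set M := ((List.ofFn fun i => A (σ i)).reverse).prod with hM
    have hcle : 0 ≤ (sSup S / sInf S) * γ ^ k := by positivity
    refine cjsr_aux_norm_le_of_unit M hcle fun x hx => ?_
    have h1 := hfl (vs (Fin.last k)) (M.mulVec x)
    have h2 := key k σ vs harc x
    have h3 := hfu (vs 0) x hx
    have h4 : sInf S * ‖M.mulVec x‖ ≤ γ ^ k * sSup S :=
      h1.trans (h2.trans (mul_le_mul_of_nonneg_left h3 (pow_nonneg hγ k)))
    rw [div_mul_eq_mul_div, le_div_iff₀ hα]
    calc ‖M.mulVec x‖ * sInf S = sInf S * ‖M.mulVec x‖ := mul_comm _ _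
      _ ≤ γ ^ k * sSup S := h4
      _ = sSup S * γ ^ k := mul_comm _ _
  refine ⟨part1, ?_⟩
  -- Part 2
  intro L hL
  set C : ℝ := sSup S / sInf S with hCdef
  have hC0 : 0 < C := div_pos hβ0 hα
  have hbound : ∀ k : ℕ, 0 < k →
      sSup {r : ℝ | ∃ (σ : Fin k → Fin m) (vs : Fin (k + 1) → V),
        (∀ i : Fin k, (vs i.castSucc, vs i.succ, σ i) ∈ E) ∧
        r = ‖((List.ofFn fun i => A (σ i)).reverse).prod‖ ^ (1 / (k : ℝ))}
      ≤ C ^ (1 / (k : ℝ)) * γ := by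
    intro k hk
    have hbpos : 0 ≤ C ^ (1 / (k : ℝ)) * γ := by positivity
    refine Real.sSup_le ?_ hbpos
    rintro r ⟨σ, vs, harc, rfl⟩
    have h1 := part1 k hk σ vs harc
    have h2 : ‖((List.ofFn fun i => A (σ i)).reverse).prod‖ ^ (1 / (k : ℝ))
        ≤ (C * γ ^ k) ^ (1 / (k : ℝ)) :=
      Real.rpow_le_rpow (norm_nonneg _) h1 (by positivity)
    rw [Real.mul_rpow hC0.le (pow_nonneg hγ k)] at h2
    have h3 : ((γ : ℝ) ^ k) ^ (1 / (k : ℝ)) = γ := by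
      rw [← Real.rpow_natCast γ k, ← Real.rpow_mul hγ, mul_one_div,
        div_self (Nat.cast_ne_zero.mpr hk.ne'), Real.rpow_one]
    rw [h3] at h2
    exact h2
  have h1 : Filter.Tendsto (fun k : ℕ => (1 / (k : ℝ))) Filter.atTop (nhds 0) :=
    tendsto_one_div_atTop_nhds_zero_nat
  have h2 : Filter.Tendsto (fun k : ℕ => Real.exp (Real.log C * (1 / (k : ℝ))))
      Filter.atTop (nhds 1) := by
    have := Real.continuous_exp.continuousAt.tendsto.comp
      (by simpa using h1.const_mul (Real.log C))
    simpa [Function.comp_def] using this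
  have h2' : Filter.Tendsto (fun k : ℕ => C ^ (1 / (k : ℝ))) Filter.atTop (nhds 1) := by
    have hfe : (fun k : ℕ => C ^ (1 / (k : ℝ)))
        = fun k : ℕ => Real.exp (Real.log C * (1 / (k : ℝ))) := by
      funext k
      rw [Real.rpow_def_of_pos hC0]
    rw [hfe]
    exact h2
  have htend : Filter.Tendsto (fun k : ℕ => C ^ (1 / (k : ℝ)) * γ) Filter.atTop (nhds γ) := by
    have := h2'.mul_const γ
    simpa using this
  refine le_of_tendsto_of_tendsto hL htend ?_
  filter_upwards [Filter.eventually_gt_atTop 0] with k hk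
  exact hbound k hk
end

section
/- Consider homogeneous polynomials p_v(x) of degree 2d, one per node v of a strongly connected automaton G, each strictly positive on ℝ^n∖{0}, such that γ^{2d} p_u(x) − p_v(A_σ x) ≥ 0 for every arc (u,v,σ) and all x. Then the constrained joint spectral radius of the labelled matrices satisfies ρ(G,𝒜) ≤ γ. -/
open Matrix

attribute [local instance] Matrix.linftyOpNormedAddCommGroup Matrix.linftyOpNormedRing

lemma eval_smul_of_isHomogeneous {n N : ℕ} {q : MvPolynomial (Fin n) ℝ}
    (hq : q.IsHomogeneous N) (t : ℝ) (x : Fin n → ℝ) :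
    MvPolynomial.eval (t • x) q = t ^ N * MvPolynomial.eval x q := by
  rw [MvPolynomial.eval_eq, MvPolynomial.eval_eq, Finset.mul_sum]
  refine Finset.sum_congr rfl fun e he => ?_
  have hdeg : ∑ i : Fin n, e i = N := by
    have h1 := hq (MvPolynomial.mem_support_iff.mp he)
    have h2 : ∑ i : Fin n, e i = ∑ i ∈ e.support, e i := by
      refine (Finset.sum_subset (Finset.subset_univ _) fun i _ hi => ?_).symm
      simpa using Finsupp.notMem_support_iff.mp hi
    rw [h2]
    simpa [Finsupp.weight_apply, Finsupp.sum] using h1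
  have hprod : ∀ y : Fin n → ℝ, ∏ i ∈ e.support, y i ^ e i = ∏ i : Fin n, y i ^ e i :=
    fun y => Finset.prod_subset (Finset.subset_univ _)
      (fun i _ hi => by rw [Finsupp.notMem_support_iff.mp hi, pow_zero])
  rw [hprod, hprod]
  have : ∏ i : Fin n, (t • x) i ^ e i = t ^ N * ∏ i : Fin n, x i ^ e i := by
    simp only [Pi.smul_apply, smul_eq_mul, mul_pow]
    rw [Finset.prod_mul_distrib, Finset.prod_pow_eq_pow_sum, hdeg]
  rw [this]; ring

/-- **SOS-type polynomial Lyapunov certificate for the CJSR.** Given a strongly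
connected automaton with arcs `E ⊆ V × V × [m]` labelled by matrices `A σ`, and
homogeneous degree-`2d` polynomials `p v`, strictly positive on `ℝⁿ ∖ {0}`, with
`p v (A σ x) ≤ γ^{2d} p u (x)` for every arc `(u, v, σ)` and all `x`, the constrained
joint spectral radius `lim_k max_{s admissible, |s| = k} ‖A_s‖^{1/k}` is at most `γ`. -/
theorem cjsr_polynomial_lyapunov
    (n m d : ℕ) (hn : 0 < n) (hd : 0 < d)
    {V : Type*} [Fintype V] [Nonempty V]
    (E : Set (V × V × Fin m))
    (A : Fin m → Matrix (Fin n) (Fin n) ℝ)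
    (hconn : ∀ u w : V, ∃ (k : ℕ) (_ : 0 < k) (vs : Fin (k + 1) → V) (σ : Fin k → Fin m),
      vs 0 = u ∧ vs (Fin.last k) = w ∧ ∀ i : Fin k, (vs i.castSucc, vs i.succ, σ i) ∈ E)
    (p : V → MvPolynomial (Fin n) ℝ)
    (hhom : ∀ v, (p v).IsHomogeneous (2 * d))
    (hpos : ∀ v (x : Fin n → ℝ), x ≠ 0 → 0 < MvPolynomial.eval x (p v))
    (γ : ℝ) (hγ : 0 ≤ γ)
    (hlyap : ∀ u v σ, (u, v, σ) ∈ E → ∀ x : Fin n → ℝ,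
      MvPolynomial.eval ((A σ).mulVec x) (p v) ≤ γ ^ (2 * d) * MvPolynomial.eval x (p u)) :
    ∀ L : ℝ,
      Filter.Tendsto (fun k : ℕ =>
          sSup {r : ℝ | ∃ (σ : Fin k → Fin m) (vs : Fin (k + 1) → V),
            (∀ i : Fin k, (vs i.castSucc, vs i.succ, σ i) ∈ E) ∧
            r = ‖((List.ofFn fun i => A (σ i)).reverse).prod‖ ^ (1 / (k : ℝ))})
        Filter.atTop (nhds L) → L ≤ γ := by
  intro L hL
  -- Step 1: the Lyapunov decay along admissible words.
  have key : ∀ (k : ℕ) (σ : Fin k → Fin m) (vs : Fin (k + 1) → V),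
      (∀ i : Fin k, (vs i.castSucc, vs i.succ, σ i) ∈ E) → ∀ x : Fin n → ℝ,
      MvPolynomial.eval
          ((((List.ofFn fun i => A (σ i)).reverse).prod).mulVec x) (p (vs (Fin.last k)))
        ≤ γ ^ (2 * d * k) * MvPolynomial.eval x (p (vs 0)) := by
    intro k
    induction k with
    | zero =>
        intro σ vs _ x
        simp [Matrix.one_mulVec, Fin.last]
    | succ k ih =>
        intro σ vs hadm x
        have hlist : (List.ofFn fun i : Fin (k+1) => A (σ i)) =
            A (σ 0) :: List.ofFn fun i : Fin k => A (σ i.succ) := by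
          rw [List.ofFn_succ]
        rw [hlist, List.reverse_cons, List.prod_append, List.prod_singleton,
          ← Matrix.mulVec_mulVec]
        have htail : ∀ i : Fin k,
            ((fun j : Fin (k+1) => vs j.succ) i.castSucc,
             (fun j : Fin (k+1) => vs j.succ) i.succ, (fun j : Fin k => σ j.succ) i) ∈ E := by
          intro i
          have h := hadm i.succ
          simpa only [Fin.succ_castSucc] using h
        have h1 := ih (fun j => σ j.succ) (fun j => vs j.succ) htail ((A (σ 0)).mulVec x)
        have hlast : (Fin.last k).succ = Fin.last (k+1) := Fin.succ_last k
        rw [hlast] at h1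
        have h2 := hlyap _ _ _ (hadm 0) x
        have h02 : (0 : Fin (k+1)).castSucc = (0 : Fin (k+2)) := rfl
        rw [h02] at h2
        calc MvPolynomial.eval ((((List.ofFn fun i : Fin k => A (σ i.succ)).reverse).prod).mulVec
                ((A (σ 0)).mulVec x)) (p (vs (Fin.last (k+1))))
            ≤ γ ^ (2 * d * k) *
                MvPolynomial.eval ((A (σ 0)).mulVec x) (p (vs (0 : Fin (k+1)).succ)) := h1
          _ ≤ γ ^ (2 * d * k) * (γ ^ (2 * d) * MvPolynomial.eval x (p (vs 0))) :=
              mul_le_mul_of_nonneg_left h2 (pow_nonneg hγ _)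
          _ = γ ^ (2 * d * (k + 1)) * MvPolynomial.eval x (p (vs 0)) := by
              rw [← mul_assoc, ← pow_add]; ring_nf
  -- Step 2: compactness constants on the unit sphere.
  haveI : Nonempty (Fin n) := ⟨⟨0, hn⟩⟩
  have hsph : (Metric.sphere (0 : Fin n → ℝ) 1).Nonempty := by
    haveI : Nontrivial (Fin n → ℝ) := by
      refine ⟨Pi.single ⟨0, hn⟩ 1, 0, ?_⟩
      intro h
      have := congrFun h ⟨0, hn⟩
      simp at this
    exact NormedSpace.sphere_nonempty.mpr zero_le_one
  have hcomp : IsCompact (Metric.sphere (0 : Fin n → ℝ) 1) := isCompact_sphere 0 1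
  have hne : ∀ x ∈ Metric.sphere (0 : Fin n → ℝ) 1, x ≠ 0 := by
    intro x hx h
    rw [h] at hx
    simp at hx
  have hmin : ∀ v : V, ∃ cv : ℝ, 0 < cv ∧
      ∀ x ∈ Metric.sphere (0 : Fin n → ℝ) 1, cv ≤ MvPolynomial.eval x (p v) := by
    intro v
    obtain ⟨x0, hx0, hle⟩ := hcomp.exists_isMinOn hsph
      ((MvPolynomial.continuous_eval (p := p v)).continuousOn)
    exact ⟨_, hpos v x0 (hne x0 hx0), fun x hx => hle hx⟩
  have hmax : ∀ v : V, ∃ Cv : ℝ,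
      ∀ x ∈ Metric.sphere (0 : Fin n → ℝ) 1, MvPolynomial.eval x (p v) ≤ Cv := by
    intro v
    obtain ⟨x0, _, hle⟩ := hcomp.exists_isMaxOn hsph
      ((MvPolynomial.continuous_eval (p := p v)).continuousOn)
    exact ⟨_, fun x hx => hle hx⟩
  choose c hcpos hc using hmin
  choose C hC using hmax
  set c0 : ℝ := Finset.univ.inf' Finset.univ_nonempty c with hc0def
  set C0 : ℝ := Finset.univ.sup' Finset.univ_nonempty C with hC0def
  have hc0pos : 0 < c0 := by
    rw [hc0def, Finset.lt_inf'_iff]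
    exact fun v _ => hcpos v
  have hc0le : ∀ v, ∀ x ∈ Metric.sphere (0 : Fin n → ℝ) 1,
      c0 ≤ MvPolynomial.eval x (p v) := fun v x hx =>
    le_trans (Finset.inf'_le _ (Finset.mem_univ v)) (hc v x hx)
  have hC0ge : ∀ v, ∀ x ∈ Metric.sphere (0 : Fin n → ℝ) 1,
      MvPolynomial.eval x (p v) ≤ C0 := fun v x hx =>
    le_trans (hC v x hx) (Finset.le_sup' _ (Finset.mem_univ v))
  have hC0pos : 0 < C0 := by
    obtain ⟨x0, hx0⟩ := hsph
    obtain v0 := Classical.arbitrary V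
    exact lt_of_lt_of_le hc0pos ((hc0le v0 x0 hx0).trans (hC0ge v0 x0 hx0))
  set K : ℝ := (C0 / c0) ^ ((1 : ℝ) / (2 * d)) with hKdef
  have hKpos : 0 < K := Real.rpow_pos_of_pos (div_pos hC0pos hc0pos) _
  -- Step 3: unit-vector bound for admissible products.
  have hvec : ∀ (k : ℕ) (σ : Fin k → Fin m) (vs : Fin (k + 1) → V),
      (∀ i : Fin k, (vs i.castSucc, vs i.succ, σ i) ∈ E) → ∀ x : Fin n → ℝ, ‖x‖ = 1 →
      ‖(((List.ofFn fun i => A (σ i)).reverse).prod).mulVec x‖ ≤ K * γ ^ k := by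
    intro k σ vs hadm x hx
    set P : Matrix (Fin n) (Fin n) ℝ := ((List.ofFn fun i => A (σ i)).reverse).prod with hPdef
    set y : Fin n → ℝ := P.mulVec x with hydef
    by_cases hy : y = 0
    · rw [hy, norm_zero]; positivity
    · have ht : 0 < ‖y‖ := norm_pos_iff.mpr hy
      have hu : (‖y‖⁻¹ • y) ∈ Metric.sphere (0 : Fin n → ℝ) 1 := by
        rw [mem_sphere_zero_iff_norm, norm_smul, norm_inv, norm_norm,
          inv_mul_cancel₀ ht.ne']
      have hdecomp : y = ‖y‖ • (‖y‖⁻¹ • y) := by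
        rw [smul_smul, mul_inv_cancel₀ ht.ne', one_smul]
      have h1 : c0 * ‖y‖ ^ (2 * d) ≤ MvPolynomial.eval y (p (vs (Fin.last k))) := by
        conv_rhs => rw [hdecomp]
        rw [eval_smul_of_isHomogeneous (hhom _)]
        have hle := hc0le (vs (Fin.last k)) _ hu
        calc c0 * ‖y‖ ^ (2 * d) = ‖y‖ ^ (2 * d) * c0 := mul_comm _ _
          _ ≤ ‖y‖ ^ (2 * d) * MvPolynomial.eval (‖y‖⁻¹ • y) (p (vs (Fin.last k))) :=
              mul_le_mul_of_nonneg_left hle (by positivity)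
      have h2 : MvPolynomial.eval y (p (vs (Fin.last k))) ≤ γ ^ (2 * d * k) * C0 := by
        refine (key k σ vs hadm x).trans ?_
        have hx' : x ∈ Metric.sphere (0 : Fin n → ℝ) 1 := mem_sphere_zero_iff_norm.mpr hx
        exact mul_le_mul_of_nonneg_left (hC0ge _ _ hx') (pow_nonneg hγ _)
      have hKpow : K ^ (2 * d) = C0 / c0 := by
        rw [hKdef, ← Real.rpow_natCast ((C0 / c0) ^ ((1 : ℝ) / (2 * d))) (2 * d),
          ← Real.rpow_mul (div_nonneg hC0pos.le hc0pos.le)]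
        rw [one_div, Nat.cast_mul, Nat.cast_ofNat]
        rw [inv_mul_cancel₀ (by positivity), Real.rpow_one]
      have h3 : ‖y‖ ^ (2 * d) ≤ (K * γ ^ k) ^ (2 * d) := by
        have hrhs : (K * γ ^ k) ^ (2 * d) = (C0 / c0) * γ ^ (2 * d * k) := by
          rw [mul_pow, hKpow, ← pow_mul, mul_comm k (2 * d)]
        rw [hrhs]
        rw [div_mul_eq_mul_div, le_div_iff₀ hc0pos, mul_comm]
        calc c0 * ‖y‖ ^ (2 * d) ≤ γ ^ (2 * d * k) * C0 := h1.trans h2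
          _ = C0 * γ ^ (2 * d * k) := mul_comm _ _
      exact le_of_pow_le_pow_left₀ (by positivity) (by positivity) h3
  -- Step 4: matrix norm bound.
  have hmat : ∀ (k : ℕ) (σ : Fin k → Fin m) (vs : Fin (k + 1) → V),
      (∀ i : Fin k, (vs i.castSucc, vs i.succ, σ i) ∈ E) →
      ‖((List.ofFn fun i => A (σ i)).reverse).prod‖ ≤ (n : ℝ) * K * γ ^ k := by
    intro k σ vs hadm
    set P : Matrix (Fin n) (Fin n) ℝ := ((List.ofFn fun i => A (σ i)).reverse).prod with hPdef
    have hentry : ∀ i j, ‖P i j‖ ≤ K * γ ^ k := by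
      intro i j
      have h1 := hvec k σ vs hadm (Pi.single j 1) (by simp [Pi.norm_single])
      have h2 : P.mulVec (Pi.single j 1) i = P i j := by
        rw [Matrix.mulVec_single]
        exact mul_one _
      calc ‖P i j‖ = ‖P.mulVec (Pi.single j 1) i‖ := by rw [h2]
        _ ≤ ‖P.mulVec (Pi.single j 1)‖ := norm_le_pi_norm _ i
        _ ≤ K * γ ^ k := h1
    have hBnn : (0 : ℝ) ≤ (n : ℝ) * K * γ ^ k := by positivity
    rw [Matrix.linfty_opNorm_def]
    have hsup : Finset.univ.sup (fun i => ∑ j, ‖P i j‖₊) ≤ ⟨_, hBnn⟩ := by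
      refine Finset.sup_le fun i _ => ?_
      apply NNReal.coe_le_coe.mp
      push_cast
      calc ∑ j, ‖P i j‖ ≤ ∑ _j : Fin n, K * γ ^ k :=
            Finset.sum_le_sum fun j _ => hentry i j
        _ = (n : ℝ) * K * γ ^ k := by
            rw [Finset.sum_const, Finset.card_univ, Fintype.card_fin, nsmul_eq_mul, mul_assoc]
    have := NNReal.coe_le_coe.mpr hsup
    exact this
  -- Step 5: pass to the limit.
  set B : ℝ := (n : ℝ) * K with hBdef
  have hBpos : 0 < B := by positivity
  have hev : ∀ᶠ k in Filter.atTop, (fun k : ℕ =>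
      sSup {r : ℝ | ∃ (σ : Fin k → Fin m) (vs : Fin (k + 1) → V),
        (∀ i : Fin k, (vs i.castSucc, vs i.succ, σ i) ∈ E) ∧
        r = ‖((List.ofFn fun i => A (σ i)).reverse).prod‖ ^ (1 / (k : ℝ))}) k
      ≤ B ^ ((1 : ℝ) / k) * γ := by
    filter_upwards [Filter.eventually_ge_atTop 1] with k hk
    have hkpos : (0 : ℝ) < k := by exact_mod_cast hk
    refine Real.sSup_le ?_ (by positivity)
    rintro r ⟨σ, vs, hadm, rfl⟩
    have hP := hmat k σ vs hadm
    calc ‖((List.ofFn fun i => A (σ i)).reverse).prod‖ ^ (1 / (k : ℝ))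
        ≤ (B * γ ^ k) ^ (1 / (k : ℝ)) := by
          exact Real.rpow_le_rpow (norm_nonneg _) hP (by positivity)
      _ = B ^ ((1 : ℝ) / k) * γ := by
          rw [Real.mul_rpow hBpos.le (by positivity), ← Real.rpow_natCast γ k,
            ← Real.rpow_mul hγ, mul_one_div, div_self hkpos.ne', Real.rpow_one]
  have hg : Filter.Tendsto (fun k : ℕ => B ^ ((1 : ℝ) / k) * γ) Filter.atTop (nhds γ) := by
    have h1 : Filter.Tendsto (fun k : ℕ => (1 : ℝ) / k) Filter.atTop (nhds 0) :=
      tendsto_one_div_atTop_nhds_zero_nat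
    have h2 : ContinuousAt (fun y : ℝ => B ^ y) 0 :=
      Real.continuousAt_const_rpow hBpos.ne'
    have h3 := (h2.tendsto.comp h1)
    rw [Real.rpow_zero] at h3
    have h4 := h3.mul_const γ
    rw [one_mul] at h4
    exact h4
  exact le_of_tendsto_of_tendsto hL hg hev
end

section
/- Let G(V,E) be a strongly connected automaton with matrices 𝒜 = {A_σ}. Define A'_{uvσ} = (e_v e_u^T) ⊗ A_σ ∈ ℝ^{n|V| × n|V|} for each arc (u,v,σ) ∈ E. Then for every k and every p ∈ [1,∞), ∑_{s ∈ E_k} ‖A_s‖^p = ∑_{s ∈ E^k} (‖A'_s‖')^p, where E_k is the set of G-admissible paths of length k, E^k is the set of all k-tuples of arcs, ‖·‖ is the induced matrix norm from a norm on ℝ^n, and ‖·‖' is the induced norm from the norm ‖e_1⊗x_1 + ⋯ + e_{|V|}⊗x_{|V|}‖' = ‖x_1‖ + ⋯ + ‖x_{|V|}‖ on ℝ^{n|V|}. In particular, for a G-admissible path s, ‖A'_s‖' = ‖A_s‖, and for a non-admissible sequence of arcs, A'_s = 0. -/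
open Matrix Kronecker

/-- The matrix norm induced by a vector norm `N`. -/
noncomputable def matNormInd {α : Type*} [Fintype α] (N : (α → ℝ) → ℝ)
    (M : Matrix α α ℝ) : ℝ :=
  sSup {c : ℝ | ∃ x : α → ℝ, N x = 1 ∧ c = N (M.mulVec x)}

/-- A tuple of arcs forms a path: consecutive arcs are compatible. -/
abbrev IsArcChain {V E : Type*} (src tgt : E → V) {k : ℕ} (e : Fin k → E) : Prop :=
  ∀ i j : Fin k, (j : ℕ) = (i : ℕ) + 1 → tgt (e i) = src (e j)

lemma chain_succ {V E : Type*} (src tgt : E → V) (k : ℕ) (e : Fin (k + 2) → E) :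
    IsArcChain src tgt e ↔
      IsArcChain src tgt (fun i : Fin (k + 1) => e i.castSucc) ∧
        tgt (e ⟨k, by omega⟩) = src (e (Fin.last (k + 1))) := by
  constructor
  · intro h
    refine ⟨fun i j hij => h i.castSucc j.castSucc (by simpa using hij), ?_⟩
    exact h ⟨k, by omega⟩ (Fin.last (k + 1)) (by simp)
  · rintro ⟨h1, h2⟩ i j hij
    by_cases hj : (j : ℕ) = k + 1
    · have hi : (i : ℕ) = k := by omega
      have : i = ⟨k, by omega⟩ := Fin.ext hi
      have hj' : j = Fin.last (k + 1) := Fin.ext hj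
      rw [this, hj']; exact h2
    · have hj2 : (j : ℕ) < k + 2 := j.isLt
      have hjlt : (j : ℕ) < k + 1 := by omega
      have hilt : (i : ℕ) < k + 1 := by omega
      have := h1 ⟨i, hilt⟩ ⟨j, hjlt⟩ hij
      simpa [Fin.castSucc, Fin.ext_iff] using this

lemma stdProd {V E : Type*} [Fintype V] [DecidableEq V] (src tgt : E → V) :
    ∀ (k : ℕ) (e : Fin (k + 1) → E),
      (List.ofFn fun i => Matrix.single (tgt (e i)) (src (e i)) (1 : ℝ)).reverse.prod =
        if IsArcChain src tgt e then
          Matrix.single (tgt (e (Fin.last k))) (src (e 0)) (1 : ℝ)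
        else 0 := by
  intro k
  induction k with
  | zero =>
    intro e
    have hch : IsArcChain src tgt e := by
      intro i j hij; omega
    rw [if_pos hch]
    simp
  | succ k ih =>
    intro e
    rw [List.ofFn_succ' (fun i => Matrix.single (tgt (e i)) (src (e i)) (1 : ℝ))]
    rw [List.concat_eq_append, List.reverse_concat, List.prod_cons]
    rw [ih (fun i => e i.castSucc)]
    by_cases h1 : IsArcChain src tgt (fun i : Fin (k + 1) => e i.castSucc)
    · by_cases h2 : tgt (e ⟨k, by omega⟩) = src (e (Fin.last (k + 1)))
      · rw [if_pos h1, if_pos ((chain_succ src tgt k e).mpr ⟨h1, h2⟩)]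
        have hlast : (Fin.last k).castSucc = (⟨k, by omega⟩ : Fin (k + 2)) := rfl
        have h0 : (0 : Fin (k+1)).castSucc = (0 : Fin (k + 2)) := rfl
        rw [hlast, h0, h2]
        rw [Matrix.single_mul_single_same, one_mul]
      · rw [if_pos h1, if_neg (fun hc => h2 ((chain_succ src tgt k e).mp hc).2)]
        have hlast : (Fin.last k).castSucc = (⟨k, by omega⟩ : Fin (k + 2)) := rfl
        rw [hlast]
        exact Matrix.single_mul_single_of_ne (h := fun hc => h2 hc.symm) ..
    · rw [if_neg h1, if_neg (fun hc => h1 ((chain_succ src tgt k e).mp hc).1), mul_zero]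

lemma kronProd {α β : Type*} [Fintype α] [DecidableEq α] [Fintype β] [DecidableEq β] :
    ∀ (k : ℕ) (B : Fin k → Matrix α α ℝ) (C : Fin k → Matrix β β ℝ),
      (List.ofFn fun i => B i ⊗ₖ C i).reverse.prod =
        (List.ofFn B).reverse.prod ⊗ₖ (List.ofFn C).reverse.prod := by
  intro k
  induction k with
  | zero => intro B C; simp [Matrix.one_kronecker_one]
  | succ k ih =>
    intro B C
    rw [List.ofFn_succ' (fun i => B i ⊗ₖ C i), List.ofFn_succ' B, List.ofFn_succ' C]
    simp only [List.concat_eq_append, List.reverse_concat, List.prod_cons]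
    rw [ih (fun i => B i.castSucc) (fun i => C i.castSucc), Matrix.mul_kronecker_mul]

section norms
variable {n : ℕ} {V : Type*} [Fintype V] [DecidableEq V] [Nonempty V]

/-- the lifted norm -/
noncomputable def NV (n : ℕ) (V : Type*) [Fintype V] (z : V × Fin n → ℝ) : ℝ :=
  ∑ v : V, ‖fun i : Fin n => z (v, i)‖

lemma NV_nonneg (z : V × Fin n → ℝ) : 0 ≤ NV n V z :=
  Finset.sum_nonneg fun _ _ => norm_nonneg _

lemma mulVec_kron (v u : V) (M : Matrix (Fin n) (Fin n) ℝ) (z : V × Fin n → ℝ)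
    (w : V) (i : Fin n) :
    ((Matrix.single v u (1 : ℝ) ⊗ₖ M).mulVec z) (w, i) =
      if w = v then (M.mulVec fun j => z (u, j)) i else 0 := by
  simp only [Matrix.mulVec, dotProduct, Fintype.sum_prod_type, kroneckerMap_apply,
    Matrix.single, Matrix.of_apply]
  by_cases hw : w = v
  · subst hw
    rw [if_pos rfl]
    rw [Finset.sum_eq_single u]
    · simp
    · intro b _ hb; simp [hb.symm]
    · intro h; simp at h
  · rw [if_neg hw]
    apply Finset.sum_eq_zero
    intro b _
    apply Finset.sum_eq_zero
    intro j _
    simp [Ne.symm hw]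

lemma NV_mulVec_kron (v u : V) (M : Matrix (Fin n) (Fin n) ℝ) (z : V × Fin n → ℝ) :
    NV n V ((Matrix.single v u (1 : ℝ) ⊗ₖ M).mulVec z) =
      ‖M.mulVec fun j => z (u, j)‖ := by
  unfold NV
  rw [Finset.sum_eq_single v]
  · congr 1; funext i; rw [mulVec_kron, if_pos rfl]
  · intro b _ hb
    have : (fun i : Fin n => ((Matrix.single v u (1:ℝ) ⊗ₖ M).mulVec z) (b, i)) = 0 := by
      funext i; rw [mulVec_kron, if_neg hb]; rfl
    rw [this, norm_zero]
  · intro h; simp at h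

lemma NV_embed (u : V) (x : Fin n → ℝ) :
    NV n V (fun p : V × Fin n => if p.1 = u then x p.2 else 0) = ‖x‖ := by
  unfold NV
  rw [Finset.sum_eq_single u]
  · simp
  · intro b _ hb
    have : (fun i : Fin n => if b = u then x i else 0) = 0 := by
      funext i; rw [if_neg hb]; rfl
    rw [this, norm_zero]
  · intro h; simp at h

lemma embed_at (u : V) (x : Fin n → ℝ) :
    (fun j : Fin n => (fun p : V × Fin n => if p.1 = u then x p.2 else 0) (u, j)) = x := by
  funext j; simp

lemma matNormInd_kron (hn : 0 < n) (v u : V) (M : Matrix (Fin n) (Fin n) ℝ) :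
    matNormInd (NV n V) (Matrix.single v u (1 : ℝ) ⊗ₖ M) =
      matNormInd (fun x : Fin n → ℝ => ‖x‖) M := by
  haveI : Nonempty (Fin n) := ⟨⟨0, hn⟩⟩
  set S : Set ℝ := {c : ℝ | ∃ x : Fin n → ℝ, ‖x‖ = 1 ∧ c = ‖M.mulVec x‖} with hS
  set S' : Set ℝ := {c : ℝ | ∃ z : V × Fin n → ℝ, NV n V z = 1 ∧
      c = NV n V ((Matrix.single v u (1 : ℝ) ⊗ₖ M).mulVec z)} with hS'
  have hSne : S.Nonempty := ⟨‖M.mulVec fun _ => 1‖, fun _ => (1:ℝ), by simp, rfl⟩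
  have hSbdd : BddAbove S := by
    set f := LinearMap.toContinuousLinearMap M.mulVecLin
    refine ⟨‖f‖, ?_⟩
    rintro c ⟨x, hx, rfl⟩
    have : M.mulVec x = f x := by simp [f]
    rw [this]
    calc ‖f x‖ ≤ ‖f‖ * ‖x‖ := f.le_opNorm x
      _ = ‖f‖ := by rw [hx, mul_one]
  have hsub : S ⊆ S' := by
    rintro c ⟨x, hx, rfl⟩
    exact ⟨fun p => if p.1 = u then x p.2 else 0, by rw [NV_embed, hx],
      by rw [NV_mulVec_kron, embed_at]⟩
  have hub : ∀ c ∈ S', c ≤ sSup S := by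
    rintro c ⟨z, hz, rfl⟩
    rw [NV_mulVec_kron]
    set y : Fin n → ℝ := fun j => z (u, j) with hy
    have hyle : ‖y‖ ≤ 1 := by
      rw [← hz]
      exact Finset.single_le_sum (f := fun w => ‖fun i => z (w, i)‖)
        (fun _ _ => norm_nonneg _) (Finset.mem_univ u)
    by_cases hy0 : y = 0
    · rw [hy0]
      simp only [Matrix.mulVec_zero, norm_zero]
      obtain ⟨s, hs⟩ := hSne
      calc (0:ℝ) ≤ s := by obtain ⟨x, _, rfl⟩ := hs; exact norm_nonneg _
        _ ≤ sSup S := le_csSup hSbdd hs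
    · have ht : 0 < ‖y‖ := norm_pos_iff.mpr hy0
      set w : Fin n → ℝ := ‖y‖⁻¹ • y with hw
      have hwn : ‖w‖ = 1 := by
        rw [hw, norm_smul, norm_inv, norm_norm, inv_mul_cancel₀ ht.ne']
      have hyw : y = ‖y‖ • w := by
        rw [hw, smul_smul, mul_inv_cancel₀ ht.ne', one_smul]
      calc ‖M.mulVec y‖ = ‖‖y‖ • M.mulVec w‖ := by
            rw [← Matrix.mulVec_smul, ← hyw]
        _ = ‖y‖ * ‖M.mulVec w‖ := by rw [norm_smul, norm_norm]
        _ ≤ 1 * ‖M.mulVec w‖ := mul_le_mul_of_nonneg_right hyle (norm_nonneg _)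
        _ = ‖M.mulVec w‖ := one_mul _
        _ ≤ sSup S := le_csSup hSbdd ⟨w, hwn, rfl⟩
  have hS'bdd : BddAbove S' := ⟨sSup S, hub⟩
  have hS'ne : S'.Nonempty := hSne.mono hsub
  apply le_antisymm
  · exact csSup_le hS'ne hub
  · exact csSup_le hSne fun c hc => le_csSup hS'bdd (hsub hc)

lemma matNormInd_zero (hn : 0 < n) :
    matNormInd (NV n V) (0 : Matrix (V × Fin n) (V × Fin n) ℝ) = 0 := by
  haveI : Nonempty (Fin n) := ⟨⟨0, hn⟩⟩
  have : {c : ℝ | ∃ z : V × Fin n → ℝ, NV n V z = 1 ∧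
      c = NV n V ((0 : Matrix (V × Fin n) (V × Fin n) ℝ).mulVec z)} = {0} := by
    ext c
    simp only [Set.mem_setOf_eq, Set.mem_singleton_iff]
    constructor
    · rintro ⟨z, hz, rfl⟩
      rw [Matrix.zero_mulVec]
      unfold NV
      apply Finset.sum_eq_zero
      intro w _
      exact norm_zero
    · rintro rfl
      obtain v0 := Classical.arbitrary V
      refine ⟨fun p => if p.1 = v0 then 1 else 0, ?_, ?_⟩
      · rw [NV_embed (x := fun _ => (1:ℝ))]; simp
      · rw [Matrix.zero_mulVec]
        unfold NV
        symm
        apply Finset.sum_eq_zero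
        intro w _
        exact norm_zero
  unfold matNormInd
  rw [this, csSup_singleton]

end norms

/-- **Kozyakin lifting.** For the lifted matrices `A'_{uvσ} = (e_v e_uᵀ) ⊗ A_σ` on
`ℝ^{n|V|}` with the norm `‖e_1 ⊗ x_1 + ⋯ + e_{|V|} ⊗ x_{|V|}‖' = ∑ ‖x_v‖`, one has
`∑_{s ∈ E_k} ‖A_s‖^p = ∑_{s ∈ E^k} (‖A'_s‖')^p`; in particular `‖A'_s‖' = ‖A_s‖` for a
`G`-admissible tuple of arcs `s` and `A'_s = 0` for a non-admissible one. -/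
theorem kozyakin_lift
    (n m : ℕ) (hn : 0 < n)
    {V : Type*} [Fintype V] [DecidableEq V] [Nonempty V]
    {E : Type*} [Fintype E] [DecidableEq E]
    (src tgt : E → V) (lab : E → Fin m)
    (A : Fin m → Matrix (Fin n) (Fin n) ℝ)
    (p : ℝ) (hp : 1 ≤ p) (k : ℕ) (hk : 0 < k) :
    ((∑ e : Fin k → E,
        if IsArcChain src tgt e then
          matNormInd (fun x : Fin n → ℝ => ‖x‖)
              ((List.ofFn fun i => A (lab (e i))).reverse).prod ^ p
        else 0) =
      ∑ e : Fin k → E,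
        matNormInd (fun z : V × Fin n → ℝ => ∑ v : V, ‖fun i : Fin n => z (v, i)‖)
            ((List.ofFn fun i =>
              (Matrix.single (tgt (e i)) (src (e i)) (1 : ℝ)) ⊗ₖ
                A (lab (e i))).reverse).prod ^ p) ∧
    (∀ e : Fin k → E, IsArcChain src tgt e →
      matNormInd (fun z : V × Fin n → ℝ => ∑ v : V, ‖fun i : Fin n => z (v, i)‖)
          ((List.ofFn fun i =>
            (Matrix.single (tgt (e i)) (src (e i)) (1 : ℝ)) ⊗ₖ
              A (lab (e i))).reverse).prod =
        matNormInd (fun x : Fin n → ℝ => ‖x‖)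
          ((List.ofFn fun i => A (lab (e i))).reverse).prod) ∧
    ∀ e : Fin k → E, ¬ IsArcChain src tgt e →
      ((List.ofFn fun i =>
        (Matrix.single (tgt (e i)) (src (e i)) (1 : ℝ)) ⊗ₖ
          A (lab (e i))).reverse).prod = 0 := by
  
  obtain ⟨k', rfl⟩ : ∃ k', k = k' + 1 := ⟨k - 1, by omega⟩
  have hNV : (fun z : V × Fin n → ℝ => ∑ v : V, ‖fun i : Fin n => z (v, i)‖) = NV n V := rfl
  have hlift : ∀ e : Fin (k' + 1) → E,
      ((List.ofFn fun i =>
        (Matrix.single (tgt (e i)) (src (e i)) (1 : ℝ)) ⊗ₖ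
          A (lab (e i))).reverse).prod =
      (if IsArcChain src tgt e then
          Matrix.single (tgt (e (Fin.last k'))) (src (e 0)) (1 : ℝ)
        else 0) ⊗ₖ ((List.ofFn fun i => A (lab (e i))).reverse).prod := by
    intro e
    rw [kronProd (k' + 1) (fun i => Matrix.single (tgt (e i)) (src (e i)) (1 : ℝ))
      (fun i => A (lab (e i))), stdProd src tgt k' e]
  have part3 : ∀ e : Fin (k' + 1) → E, ¬ IsArcChain src tgt e →
      ((List.ofFn fun i =>
        (Matrix.single (tgt (e i)) (src (e i)) (1 : ℝ)) ⊗ₖ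
          A (lab (e i))).reverse).prod = 0 := by
    intro e he
    rw [hlift e, if_neg he, Matrix.zero_kronecker]
  have part2 : ∀ e : Fin (k' + 1) → E, IsArcChain src tgt e →
      matNormInd (fun z : V × Fin n → ℝ => ∑ v : V, ‖fun i : Fin n => z (v, i)‖)
          ((List.ofFn fun i =>
            (Matrix.single (tgt (e i)) (src (e i)) (1 : ℝ)) ⊗ₖ
              A (lab (e i))).reverse).prod =
        matNormInd (fun x : Fin n → ℝ => ‖x‖)
          ((List.ofFn fun i => A (lab (e i))).reverse).prod := by
    intro e he
    rw [hNV, hlift e, if_pos he, matNormInd_kron hn]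
  refine ⟨?_, part2, part3⟩
  apply Finset.sum_congr rfl
  intro e _
  by_cases he : IsArcChain src tgt e
  · rw [if_pos he, part2 e he]
  · rw [if_neg he, part3 e he, hNV, matNormInd_zero hn,
      Real.zero_rpow (by linarith : p ≠ 0)]
end

section
/- Let 𝒜 = {A_1, ..., A_m} be a finite set of matrices leaving a proper (closed, solid, convex, pointed) cone K ⊆ ℝ^n invariant. Then the 1-radius satisfies ρ_1(𝒜) = (1/m) lim_{k→∞} ‖∑_{s ∈ [m]^k} A_s‖^{1/k} = (1/m) ρ(∑_{A ∈ 𝒜} A), where ρ_1(𝒜) = lim_{k→∞} (m^{-k} ∑_{s ∈ [m]^k} ‖A_s‖)^{1/k} and A_s = A_{σ_k}⋯A_{σ_1} for s = (σ_1,...,σ_k). -/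
open Matrix

attribute [local instance] Matrix.linftyOpNormedAddCommGroup Matrix.linftyOpNormedRing

/-- Product `f (k-1) * ⋯ * f 1 * f 0` of a word of matrices (rightmost letter first). -/
noncomputable def prodRevWord {α : Type*} [Monoid α] {k : ℕ} (f : Fin k → α) : α :=
  ((List.ofFn f).reverse).prod

open Metric Filter

attribute [local instance] Matrix.linftyOpNormedAlgebra

lemma prodRevWord_zero {α : Type*} [Monoid α] (f : Fin 0 → α) : prodRevWord f = 1 := by
  simp [prodRevWord]

lemma prodRevWord_succ {α : Type*} [Monoid α] {k : ℕ} (f : Fin (k + 1) → α) :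
    prodRevWord f = prodRevWord (fun i => f i.succ) * f 0 := by
  simp [prodRevWord, List.ofFn_succ]

lemma sum_prodRevWord {α : Type*} [Semiring α] {m : ℕ} (A : Fin m → α) (k : ℕ) :
    ∑ s : Fin k → Fin m, prodRevWord (fun i => A (s i)) = (∑ σ, A σ) ^ k := by
  induction k with
  | zero =>
      rw [pow_zero, Fintype.sum_unique]
      exact prodRevWord_zero _
  | succ k ih =>
      rw [pow_succ, ← ih]
      rw [← (Fin.consEquiv (fun _ : Fin (k+1) => Fin m)).sum_comp
        (fun s => prodRevWord (fun i => A (s i)))]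
      rw [Fintype.sum_prod_type, Finset.sum_comm, Finset.sum_mul]
      refine Finset.sum_congr rfl fun t _ => ?_
      rw [Finset.mul_sum]
      refine Finset.sum_congr rfl fun σ _ => ?_
      have : prodRevWord (fun i => A ((Fin.consEquiv (fun _ : Fin (k+1) => Fin m)) (σ, t) i))
          = prodRevWord (fun i => A (t i)) * A σ := by
        rw [prodRevWord_succ]
        simp [Fin.consEquiv]
      rw [this]

lemma listProd_preserves {n : ℕ} (K : Set (Fin n → ℝ)) :
    ∀ L : List (Matrix (Fin n) (Fin n) ℝ), (∀ M ∈ L, ∀ x ∈ K, M.mulVec x ∈ K) →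
      ∀ x ∈ K, L.prod.mulVec x ∈ K := by
  intro L
  induction L with
  | nil => intro _ x hx; simpa using hx
  | cons M L ih =>
      intro h x hx
      rw [List.prod_cons, ← mulVec_mulVec]
      exact h M List.mem_cons_self _ (ih (fun N hN => h N (List.mem_cons_of_mem _ hN)) x hx)

lemma prodRevWord_preserves {n k : ℕ} (K : Set (Fin n → ℝ))
    (f : Fin k → Matrix (Fin n) (Fin n) ℝ) (h : ∀ i, ∀ x ∈ K, (f i).mulVec x ∈ K) :
    ∀ x ∈ K, (prodRevWord f).mulVec x ∈ K := by
  refine listProd_preserves K _ (fun M hM => ?_)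
  rw [List.mem_reverse, List.mem_ofFn] at hM
  obtain ⟨i, rfl⟩ := hM
  exact h i

lemma norm_map_complex {n : ℕ} (M : Matrix (Fin n) (Fin n) ℝ) :
    ‖M.map (fun a => (a : ℂ))‖ = ‖M‖ := by
  rw [linfty_opNorm_def, linfty_opNorm_def]
  congr 1
  refine Finset.sup_congr rfl fun i _ => ?_
  refine Finset.sum_congr rfl fun j _ => ?_
  simp [Matrix.map_apply]

/-- a uniformly positive functional on a proper cone -/
lemma exists_uniform_pos_functional {n : ℕ} (K : Set (Fin n → ℝ))
    (hclosed : IsClosed K) (hconvex : Convex ℝ K)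
    (hpointed : K ∩ (-K) = {0})
    (hcone : ∀ (c : ℝ), 0 ≤ c → ∀ x ∈ K, c • x ∈ K) :
    ∃ (f : (Fin n → ℝ) →L[ℝ] ℝ) (u : ℝ), 0 < u ∧ ∀ y ∈ K, u * ‖y‖ ≤ f y := by
  have h0K : (0 : Fin n → ℝ) ∈ K := by
    have : (0 : Fin n → ℝ) ∈ K ∩ (-K) := by rw [hpointed]; rfl
    exact this.1
  -- addition closure
  have hadd : ∀ y ∈ K, ∀ z ∈ K, y + z ∈ K := by
    intro y hy z hz
    have h2 := hcone 2 (by norm_num) _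
      (hconvex hy hz (by norm_num : (0:ℝ) ≤ 1/2) (by norm_num : (0:ℝ) ≤ 1/2) (by norm_num))
    convert h2 using 1
    module
  have hsphere : ∀ y : Fin n → ℝ, y ≠ 0 → ‖y‖⁻¹ • y ∈ sphere (0 : Fin n → ℝ) 1 := by
    intro y hy0
    have hny : (0:ℝ) < ‖y‖ := norm_pos_iff.mpr hy0
    rw [mem_sphere_zero_iff_norm, norm_smul]
    simp [abs_of_pos (inv_pos.mpr hny), inv_mul_cancel₀ hny.ne']
  -- pairwise normality constant
  have hδ : ∃ δ : ℝ, 0 < δ ∧ ∀ y ∈ K, ∀ z ∈ K, δ * ‖y‖ ≤ ‖y + z‖ := by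
    by_cases hS : (K ∩ sphere (0 : Fin n → ℝ) 1).Nonempty
    · have hScpt : IsCompact (K ∩ sphere (0 : Fin n → ℝ) 1) :=
        (isCompact_sphere 0 1).inter_left hclosed
      have hcont : Continuous fun x : Fin n → ℝ => infDist (-x) K :=
        (continuous_infDist_pt K).comp continuous_neg
      obtain ⟨x₀, hx₀, hmin⟩ := hScpt.exists_isMinOn hS hcont.continuousOn
      have hpos : 0 < infDist (-x₀) K := by
        rw [← hclosed.notMem_iff_infDist_pos ⟨0, h0K⟩]
        intro hmem
        have hmem' : x₀ ∈ K ∩ (-K) := ⟨hx₀.1, by simpa using hmem⟩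
        rw [hpointed] at hmem'
        have hx0 : x₀ = 0 := by simpa using hmem'
        rw [hx0] at hx₀
        have := hx₀.2
        norm_num [mem_sphere_zero_iff_norm] at this
      refine ⟨infDist (-x₀) K, hpos, ?_⟩
      intro y hy z hz
      rcases eq_or_ne y 0 with rfl | hy0
      · simpa using mul_nonneg hpos.le (norm_nonneg _)
      have hny : (0:ℝ) < ‖y‖ := norm_pos_iff.mpr hy0
      have hyu : ‖y‖⁻¹ • y ∈ K ∩ sphere (0 : Fin n → ℝ) 1 :=
        ⟨hcone _ (by positivity) y hy, hsphere y hy0⟩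
      have hzu : ‖y‖⁻¹ • z ∈ K := hcone _ (by positivity) z hz
      have h1 : infDist (-x₀) K ≤ infDist (-(‖y‖⁻¹ • y)) K := hmin hyu
      have h2 : infDist (-(‖y‖⁻¹ • y)) K ≤ dist (-(‖y‖⁻¹ • y)) (‖y‖⁻¹ • z) :=
        infDist_le_dist_of_mem hzu
      have h3 : dist (-(‖y‖⁻¹ • y)) (‖y‖⁻¹ • z) = ‖y‖⁻¹ * ‖y + z‖ := by
        rw [dist_eq_norm]
        rw [show -(‖y‖⁻¹ • y) - ‖y‖⁻¹ • z = -(‖y‖⁻¹ • (y + z)) by module]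
        rw [norm_neg, norm_smul]
        simp [abs_of_pos (inv_pos.mpr hny)]
      have h4 := (h1.trans h2).trans_eq h3
      calc infDist (-x₀) K * ‖y‖ ≤ (‖y‖⁻¹ * ‖y + z‖) * ‖y‖ :=
            mul_le_mul_of_nonneg_right h4 (norm_nonneg _)
        _ = ‖y + z‖ := by field_simp
    · -- K ⊆ {0}
      refine ⟨1, one_pos, ?_⟩
      intro y hy z hz
      rcases eq_or_ne y 0 with rfl | hy0
      · simpa using norm_nonneg _
      have hny : (0:ℝ) < ‖y‖ := norm_pos_iff.mpr hy0
      exact absurd ⟨hcone _ (by positivity) y hy, hsphere y hy0⟩ (fun h => hS ⟨_, h⟩)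
  obtain ⟨δ, hδpos, hδ⟩ := hδ
  -- lower bound on convex hull of K ∩ sphere
  set S := K ∩ sphere (0 : Fin n → ℝ) 1 with hSdef
  have hhull : ∀ x ∈ convexHull ℝ S, δ / (n + 1) ≤ ‖x‖ := by
    intro x hx
    obtain ⟨ι, hι, z, w, hzS, hai, hwpos, hwsum, hxeq⟩ :=
      eq_pos_convex_span_of_mem_convexHull hx
    have hne : Nonempty ι := by
      by_contra h
      rw [not_nonempty_iff] at h
      rw [Finset.univ_eq_empty, Finset.sum_empty] at hwsum
      exact one_ne_zero hwsum.symm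
    have hcardpos : (0:ℝ) < Fintype.card ι := by exact_mod_cast Fintype.card_pos
    have hcard : (Fintype.card ι : ℝ) ≤ n + 1 := by
      have h1 := hai.card_le_finrank_succ
      have h2 : Module.finrank ℝ (vectorSpan ℝ (Set.range z)) ≤ n := by
        have := Submodule.finrank_le (vectorSpan ℝ (Set.range z))
        simpa [Module.finrank_fin_fun] using this
      have : Fintype.card ι ≤ n + 1 := h1.trans (by omega)
      exact_mod_cast this
    obtain ⟨i₀, -, hi₀⟩ := Finset.exists_le_of_sum_le (Finset.univ_nonempty (α := ι))
      (le_of_eq (show ∑ _i : ι, ((Fintype.card ι : ℝ))⁻¹ = ∑ i, w i by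
        rw [hwsum, Finset.sum_const, Finset.card_univ, nsmul_eq_mul,
          mul_inv_cancel₀ hcardpos.ne']))
    -- split off i₀
    have hzK : ∀ i, z i ∈ K := fun i => (hzS (Set.mem_range_self i)).1
    haveI := Classical.decEq ι
    have hznorm : ∀ i, ‖z i‖ = 1 := fun i =>
      mem_sphere_zero_iff_norm.mp (hzS (Set.mem_range_self i)).2
    have hrest : ∑ i ∈ Finset.univ.erase i₀, w i • z i ∈ K := by
      refine Finset.sum_induction _ (· ∈ K) (fun a b ha hb => hadd a ha b hb) h0K ?_
      exact fun i _ => hcone _ (hwpos i).le _ (hzK i)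
    have hx0 : x = w i₀ • z i₀ + ∑ i ∈ Finset.univ.erase i₀, w i • z i := by
      rw [← hxeq, ← Finset.add_sum_erase _ _ (Finset.mem_univ i₀)]
    have hy0 : w i₀ • z i₀ ∈ K := hcone _ (hwpos i₀).le _ (hzK i₀)
    have hbound := hδ _ hy0 _ hrest
    rw [← hx0] at hbound
    have hnorm : ‖w i₀ • z i₀‖ = w i₀ := by
      rw [norm_smul, hznorm, mul_one, Real.norm_eq_abs, abs_of_pos (hwpos i₀)]
    rw [hnorm] at hbound
    calc δ / (n + 1) ≤ δ * (Fintype.card ι : ℝ)⁻¹ := by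
          rw [div_eq_mul_inv]
          exact mul_le_mul_of_nonneg_left (by
            apply inv_anti₀ hcardpos hcard) hδpos.le
      _ ≤ δ * w i₀ := mul_le_mul_of_nonneg_left hi₀ hδpos.le
      _ ≤ ‖x‖ := hbound
  -- separation
  have h0not : (0 : Fin n → ℝ) ∉ closure (convexHull ℝ S) := by
    intro h0
    have hsub : closure (convexHull ℝ S) ⊆ {x : Fin n → ℝ | δ / (n + 1) ≤ ‖x‖} := by
      apply closure_minimal hhull
      exact isClosed_le continuous_const continuous_norm
    have := hsub h0
    simp only [Set.mem_setOf_eq, norm_zero] at this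
    have : (0:ℝ) < δ / (n+1) := by positivity
    linarith [hsub h0, this]
  obtain ⟨f, u, hfu, hub⟩ := geometric_hahn_banach_point_closed
    ((convex_convexHull ℝ S).closure) isClosed_closure h0not
  rw [map_zero] at hfu
  refine ⟨f, u, hfu, ?_⟩
  intro y hy
  rcases eq_or_ne y 0 with rfl | hy0
  · simp
  have hny : (0:ℝ) < ‖y‖ := norm_pos_iff.mpr hy0
  have hyS : ‖y‖⁻¹ • y ∈ closure (convexHull ℝ S) :=
    subset_closure (subset_convexHull ℝ S ⟨hcone _ (by positivity) y hy, hsphere y hy0⟩)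
  have := (hub _ hyS).le
  rw [_root_.map_smul, smul_eq_mul] at this
  calc u * ‖y‖ ≤ (‖y‖⁻¹ * f y) * ‖y‖ := mul_le_mul_of_nonneg_right this (norm_nonneg _)
    _ = f y := by field_simp

/-- **The 1-radius of a set of matrices leaving a proper cone invariant.** If
`𝒜 = {A_1, …, A_m}` leaves a proper (closed, solid, convex, pointed) cone `K ⊆ ℝⁿ`
invariant, then `ρ_1(𝒜) = lim_k (m^{-k} ∑_{s} ‖A_s‖)^{1/k}` equals both
`(1/m) lim_k ‖∑_{s ∈ [m]^k} A_s‖^{1/k}` and `(1/m) ρ(∑_{A ∈ 𝒜} A)`. -/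
theorem one_radius_of_invariant_proper_cone
    (n m : ℕ) (hm : 0 < m)
    (A : Fin m → Matrix (Fin n) (Fin n) ℝ)
    (K : Set (Fin n → ℝ))
    (hclosed : IsClosed K) (hconvex : Convex ℝ K)
    (hsolid : (interior K).Nonempty)
    (hpointed : K ∩ (-K) = {0})
    (hcone : ∀ (c : ℝ), 0 ≤ c → ∀ x ∈ K, c • x ∈ K)
    (hinv : ∀ σ : Fin m, ∀ x ∈ K, (A σ).mulVec x ∈ K) :
    Filter.Tendsto (fun k : ℕ =>
        (((m : ℝ) ^ k)⁻¹ * ∑ s : Fin k → Fin m, ‖prodRevWord fun i => A (s i)‖) ^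
          (1 / (k : ℝ)))
      Filter.atTop
      (nhds (((m : ℝ))⁻¹ *
        (spectralRadius ℂ ((∑ σ, A σ).map fun a => (a : ℂ))).toReal)) ∧
    Filter.Tendsto (fun k : ℕ =>
        ‖∑ s : Fin k → Fin m, prodRevWord fun i => A (s i)‖ ^ (1 / (k : ℝ)))
      Filter.atTop
      (nhds ((spectralRadius ℂ ((∑ σ, A σ).map fun a => (a : ℂ))).toReal)) := by
  classical
  obtain ⟨f, u, hu, hf⟩ := exists_uniform_pos_functional K hclosed hconvex hpointed hcone
  obtain ⟨e, he⟩ := hsolid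
  obtain ⟨ε, hε, hball⟩ : ∃ ε : ℝ, 0 < ε ∧ Metric.closedBall e ε ⊆ K := by
    rcases Metric.mem_nhds_iff.mp (mem_interior_iff_mem_nhds.mp he) with ⟨δ, hδ, hb⟩
    exact ⟨δ/2, by positivity, (Metric.closedBall_subset_ball (by linarith)).trans hb⟩
  have heK : e ∈ K := interior_subset he
  -- key operator bound for cone-preserving matrices
  have hkey : ∀ M : Matrix (Fin n) (Fin n) ℝ, (∀ x ∈ K, M.mulVec x ∈ K) →
      ‖M‖ ≤ (ε * u)⁻¹ * f (M.mulVec e) := by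
    intro M hM
    have hfK : ∀ v ∈ K, ‖v‖ ≤ u⁻¹ * f v := by
      intro v hv
      rw [le_inv_mul_iff₀ hu]
      exact hf v hv
    have hfe0 : 0 ≤ f (M.mulVec e) :=
      le_trans (by positivity) (hf _ (hM e heK))
    rw [linfty_opNorm_eq_opNorm]
    refine ContinuousLinearMap.opNorm_le_bound _ (by positivity) ?_
    intro x
    show ‖M.mulVec x‖ ≤ _
    rcases eq_or_ne x 0 with rfl | hx0
    · simp [Matrix.mulVec_zero]
    have hnx : (0:ℝ) < ‖x‖ := norm_pos_iff.mpr hx0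
    set c : ℝ := ε / ‖x‖ with hc
    have hc0 : 0 < c := by positivity
    have hmem : ∀ t : ℝ, |t| = 1 → e + (t * c) • x ∈ K := by
      intro t ht
      apply hball
      rw [Metric.mem_closedBall, dist_eq_norm, show e + (t * c) • x - e = (t * c) • x by abel,
        norm_smul]
      rw [Real.norm_eq_abs, abs_mul, ht, one_mul, abs_of_pos hc0]
      rw [hc, div_mul_cancel₀ _ hnx.ne']
    have hP : M.mulVec (e + c • x) ∈ K := hM _ (by simpa using hmem 1 (by norm_num))
    have hQ : M.mulVec (e - c • x) ∈ K := hM _ (by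
      have := hmem (-1) (by norm_num)
      simpa [neg_smul, sub_eq_add_neg] using this)
    set P := M.mulVec (e + c • x) with hPdef
    set Q := M.mulVec (e - c • x) with hQdef
    have hsum : f P + f Q = 2 * f (M.mulVec e) := by
      rw [← map_add]
      have hvec : (e + c • x) + (e - c • x) = (2:ℝ) • e := by module
      have : P + Q = M.mulVec ((2:ℝ) • e) := by
        rw [hPdef, hQdef, ← Matrix.mulVec_add, hvec]
      rw [this, Matrix.mulVec_smul, _root_.map_smul, smul_eq_mul]
    have hdiff : M.mulVec x = (2 * c)⁻¹ • (P - Q) := by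
      rw [hPdef, hQdef, ← Matrix.mulVec_sub]
      rw [show e + c • x - (e - c • x) = (2 * c) • x by module]
      rw [Matrix.mulVec_smul, smul_smul, inv_mul_cancel₀ (by positivity), one_smul]
    have hnormbound : ‖M.mulVec x‖ ≤ (2 * c)⁻¹ * (u⁻¹ * (f P + f Q)) := by
      rw [hdiff, norm_smul, Real.norm_eq_abs, abs_of_pos (by positivity : (0:ℝ) < (2*c)⁻¹)]
      apply mul_le_mul_of_nonneg_left _ (by positivity)
      calc ‖P - Q‖ ≤ ‖P‖ + ‖Q‖ := norm_sub_le _ _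
        _ ≤ u⁻¹ * f P + u⁻¹ * f Q := add_le_add (hfK P hP) (hfK Q hQ)
        _ = u⁻¹ * (f P + f Q) := by ring
    calc ‖M.mulVec x‖ ≤ (2 * c)⁻¹ * (u⁻¹ * (2 * f (M.mulVec e))) := by
          rw [← hsum]; exact hnormbound
      _ = (ε * u)⁻¹ * f (M.mulVec e) * ‖x‖ := by
          rw [hc]; field_simp
  -- notation
  set B := ∑ σ, A σ with hB
  set W : (k : ℕ) → (Fin k → Fin m) → Matrix (Fin n) (Fin n) ℝ :=
    fun k s => prodRevWord (fun i => A (s i)) with hW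
  have hWinv : ∀ (k : ℕ) (s : Fin k → Fin m), ∀ x ∈ K, (W k s).mulVec x ∈ K :=
    fun k s => prodRevWord_preserves K _ (fun i => hinv (s i))
  have hWsum : ∀ k : ℕ, ∑ s : Fin k → Fin m, W k s = B ^ k := fun k => sum_prodRevWord A k
  set a : ℕ → ℝ := fun k => ∑ s : Fin k → Fin m, ‖W k s‖ with ha
  have ha0 : ∀ k, 0 ≤ a k := fun k => Finset.sum_nonneg fun s _ => norm_nonneg _
  have hlow : ∀ k, ‖B ^ k‖ ≤ a k := by
    intro k
    rw [← hWsum k]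
    exact norm_sum_le _ _
  set C : ℝ := max ((ε * u)⁻¹ * (‖f‖ * ‖e‖)) 1 with hC
  have hC1 : (1:ℝ) ≤ C := le_max_right _ _
  have hC0 : (0:ℝ) < C := lt_of_lt_of_le one_pos hC1
  have hup : ∀ k, a k ≤ C * ‖B ^ k‖ := by
    intro k
    have h1 : a k ≤ (ε * u)⁻¹ * f ((B ^ k).mulVec e) := by
      calc a k ≤ ∑ s : Fin k → Fin m, (ε * u)⁻¹ * f ((W k s).mulVec e) :=
            Finset.sum_le_sum fun s _ => hkey _ (hWinv k s)
        _ = (ε * u)⁻¹ * f ((B ^ k).mulVec e) := by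
            rw [← Finset.mul_sum, ← map_sum]
            congr 2
            rw [← hWsum k]
            exact (map_sum (Matrix.mulVec.addMonoidHomLeft e) (W k) Finset.univ).symm
    have h2 : f ((B ^ k).mulVec e) ≤ ‖f‖ * (‖B ^ k‖ * ‖e‖) := by
      calc f ((B ^ k).mulVec e) ≤ ‖f ((B ^ k).mulVec e)‖ := Real.le_norm_self _
        _ ≤ ‖f‖ * ‖(B ^ k).mulVec e‖ := f.le_opNorm _
        _ ≤ ‖f‖ * (‖B ^ k‖ * ‖e‖) :=
            mul_le_mul_of_nonneg_left (linfty_opNorm_mulVec _ _) (norm_nonneg _)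
    calc a k ≤ (ε * u)⁻¹ * (‖f‖ * (‖B ^ k‖ * ‖e‖)) := by
          refine h1.trans ?_
          exact mul_le_mul_of_nonneg_left h2 (by positivity)
      _ = ((ε * u)⁻¹ * (‖f‖ * ‖e‖)) * ‖B ^ k‖ := by ring
      _ ≤ C * ‖B ^ k‖ := mul_le_mul_of_nonneg_right (le_max_left _ _) (norm_nonneg _)
  -- Gelfand's formula
  haveI : CompleteSpace (Matrix (Fin n) (Fin n) ℂ) := FiniteDimensional.complete ℂ _
  set Bc : Matrix (Fin n) (Fin n) ℂ := B.map (fun a => (a : ℂ)) with hBc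
  have hpowmap : ∀ k : ℕ, Bc ^ k = (B ^ k).map (fun a => (a : ℂ)) := by
    intro k
    have h1 : Bc = (Complex.ofRealHom.mapMatrix : Matrix (Fin n) (Fin n) ℝ →+* _) B := rfl
    have h2 : (B ^ k).map (fun a => (a : ℂ))
        = (Complex.ofRealHom.mapMatrix : Matrix (Fin n) (Fin n) ℝ →+* _) (B ^ k) := rfl
    rw [h1, h2, map_pow]
  have hnormpow : ∀ k : ℕ, ‖Bc ^ k‖ = ‖B ^ k‖ := by
    intro k
    rw [hpowmap k, norm_map_complex]
  have hrne : spectralRadius ℂ Bc ≠ ⊤ := by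
    refine ne_top_of_le_ne_top ?_ (spectrum.spectralRadius_le_pow_nnnorm_pow_one_div ℂ Bc 0)
    exact ENNReal.mul_ne_top
      (ENNReal.rpow_ne_top_of_nonneg (by norm_num) ENNReal.coe_ne_top)
      (ENNReal.rpow_ne_top_of_nonneg (by norm_num) ENNReal.coe_ne_top)
  set r : ℝ := (spectralRadius ℂ Bc).toReal with hr
  have hgel : Filter.Tendsto (fun k : ℕ => ‖B ^ k‖ ^ (1 / (k:ℝ))) Filter.atTop (nhds r) := by
    have h1 := spectrum.pow_norm_pow_one_div_tendsto_nhds_spectralRadius Bc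
    have h2 := (ENNReal.tendsto_toReal hrne).comp h1
    refine Filter.Tendsto.congr ?_ h2
    intro k
    simp only [Function.comp_apply]
    rw [ENNReal.toReal_ofReal (Real.rpow_nonneg (norm_nonneg _) _), hnormpow]
  refine ⟨?_, ?_⟩
  · -- first limit
    have hCpow : Filter.Tendsto (fun k : ℕ => C ^ (1 / (k:ℝ))) Filter.atTop (nhds 1) := by
      have hcont : ContinuousAt (fun y : ℝ => C ^ y) 0 :=
        Real.continuousAt_const_rpow hC0.ne'
      have := hcont.tendsto.comp tendsto_one_div_atTop_nhds_zero_nat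
      simpa [Real.rpow_zero, Function.comp_def] using this
    have hupper : Filter.Tendsto (fun k : ℕ => C ^ (1 / (k:ℝ)) * ‖B ^ k‖ ^ (1 / (k:ℝ)))
        Filter.atTop (nhds r) := by
      have := hCpow.mul hgel
      simpa using this
    have hamid : Filter.Tendsto (fun k : ℕ => a k ^ (1 / (k:ℝ))) Filter.atTop (nhds r) := by
      refine tendsto_of_tendsto_of_tendsto_of_le_of_le hgel hupper ?_ ?_
      · intro k
        exact Real.rpow_le_rpow (norm_nonneg _) (hlow k) (by positivity)
      · intro k
        show a k ^ (1/(k:ℝ)) ≤ C ^ (1/(k:ℝ)) * ‖B ^ k‖ ^ (1/(k:ℝ))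
        rw [← Real.mul_rpow hC0.le (norm_nonneg _)]
        exact Real.rpow_le_rpow (ha0 k) (hup k) (by positivity)
    have hconst : Filter.Tendsto (fun k : ℕ => (m:ℝ)⁻¹ * a k ^ (1 / (k:ℝ)))
        Filter.atTop (nhds ((m:ℝ)⁻¹ * r)) := tendsto_const_nhds.mul hamid
    refine Filter.Tendsto.congr' ?_ hconst
    filter_upwards [Filter.eventually_atTop.mpr ⟨1, fun k hk => hk⟩] with k hk
    have hk0 : (k:ℝ) ≠ 0 := by
      have : (0:ℕ) < k := hk
      exact_mod_cast this.ne'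
    have hm0 : (0:ℝ) < (m:ℝ) := by exact_mod_cast hm
    rw [Real.mul_rpow (by positivity) (ha0 k)]
    congr 1
    rw [show ((m:ℝ) ^ k)⁻¹ = (m:ℝ) ^ (-(k:ℝ)) by
      rw [← Real.rpow_natCast (m:ℝ) k, ← Real.rpow_neg hm0.le]]
    rw [← Real.rpow_mul hm0.le]
    rw [show -(k:ℝ) * (1 / (k:ℝ)) = -1 by field_simp]
    rw [Real.rpow_neg_one]
  · -- second limit
    refine Filter.Tendsto.congr ?_ hgel
    intro k
    rw [hWsum k]
end

section
/- Let G be a strongly connected automaton and 𝒜 a finite set of matrices, and for p ∈ [1,∞) define the constrained p-radius ρ_p(G,𝒜) = lim_{k→∞} (|E_k|^{-1} ∑_{s ∈ E_k} ‖A_s‖^p)^{1/(pk)}, where E_k is the set of admissible paths of length k. Then for integers p ≤ q: ρ_p(G,𝒜) ≤ ρ_q(G,𝒜) ≤ ρ(G,𝒜) ≤ ρ(A(G))^{1/q} ρ_q(G,𝒜) ≤ ρ(A(G))^{1/p} ρ_p(G,𝒜), where ρ(G,𝒜) is the constrained joint spectral radius and A(G) is the adjacency matrix of G. -/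
open Matrix

attribute [local instance] Matrix.linftyOpNormedAddCommGroup Matrix.linftyOpNormedRing

/-- The `p`-radius sequence `(|E_k|⁻¹ ∑_{s ∈ E_k} ‖A_s‖^p)^{1/(pk)}`. -/
noncomputable def pRadiusSeq {V E : Type*} [Fintype E] (src tgt : E → V)
    [DecidableEq V] {n m : ℕ} (lab : E → Fin m)
    (A : Fin m → Matrix (Fin n) (Fin n) ℝ) (p : ℕ) (k : ℕ) : ℝ :=
  (((∑ e : Fin k → E, if IsArcChain src tgt e then (1 : ℝ) else 0))⁻¹ *
      ∑ e : Fin k → E, if IsArcChain src tgt e then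
        ‖((List.ofFn fun i => A (lab (e i))).reverse).prod‖ ^ (p : ℝ)
      else 0) ^ (1 / ((p : ℝ) * k))

/-- The CJSR sequence `max_{s ∈ E_k} ‖A_s‖^{1/k}`. -/
noncomputable def cjsrSeq {V E : Type*} [Fintype E] (src tgt : E → V)
    {n m : ℕ} (lab : E → Fin m)
    (A : Fin m → Matrix (Fin n) (Fin n) ℝ) (k : ℕ) : ℝ :=
  sSup {r : ℝ | ∃ e : Fin k → E, IsArcChain src tgt e ∧
    r = ‖((List.ofFn fun i => A (lab (e i))).reverse).prod‖ ^ (1 / (k : ℝ))}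

/-- Superadditivity of `x ^ r` on nonnegative reals for `r ≥ 1`. -/
lemma sum_rpow_le_rpow_sum_aux {ι : Type*} (s : Finset ι) (b : ι → ℝ)
    (hb : ∀ i ∈ s, 0 ≤ b i) {r : ℝ} (hr : 1 ≤ r) :
    ∑ i ∈ s, b i ^ r ≤ (∑ i ∈ s, b i) ^ r := by
  have hr0 : (0:ℝ) < r := lt_of_lt_of_le one_pos hr
  set S := ∑ i ∈ s, b i with hS
  have hS0 : 0 ≤ S := Finset.sum_nonneg hb
  rcases eq_or_lt_of_le hS0 with h0 | hpos
  · have hz : ∀ i ∈ s, b i = 0 := by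
      intro i hi
      have h1 := Finset.single_le_sum hb hi
      have := hb i hi
      linarith [h1.trans_eq h0.symm]
    rw [← h0, Real.zero_rpow hr0.ne']
    refine le_of_eq (Finset.sum_eq_zero fun i hi => ?_)
    rw [hz i hi, Real.zero_rpow hr0.ne']
  · have step1 : ∑ i ∈ s, b i ^ r ≤ ∑ i ∈ s, b i * S ^ (r - 1) := by
      refine Finset.sum_le_sum fun i hi => ?_
      rcases eq_or_lt_of_le (hb i hi) with h | h
      · rw [← h, Real.zero_rpow hr0.ne', zero_mul]
      · have e1 : b i ^ r = b i * b i ^ (r - 1) := by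
          rw [← Real.rpow_one_add' h.le (by linarith), add_sub_cancel]
        rw [e1]
        exact mul_le_mul_of_nonneg_left
          (Real.rpow_le_rpow h.le (Finset.single_le_sum hb hi) (by linarith)) h.le
    have step2 : ∑ i ∈ s, b i * S ^ (r - 1) = S ^ r := by
      rw [← Finset.sum_mul, ← hS, ← Real.rpow_one_add' hS0 (by linarith), add_sub_cancel]
    linarith [step1, step2.le]

/-- Power-mean chain for a finite nonempty family of nonnegative reals. -/
lemma pRadius_master {ι : Type*} (s : Finset ι) (hs : s.Nonempty) (a : ι → ℝ)
    (ha : ∀ i, 0 ≤ a i) {p q : ℝ} (hp : 1 ≤ p) (hpq : p ≤ q) :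
    ((s.card : ℝ)⁻¹ * ∑ i ∈ s, a i ^ p) ^ (1/p) ≤
        ((s.card : ℝ)⁻¹ * ∑ i ∈ s, a i ^ q) ^ (1/q) ∧
      ((s.card : ℝ)⁻¹ * ∑ i ∈ s, a i ^ q) ^ (1/q) ≤ s.sup' hs a ∧
      s.sup' hs a ≤ (∑ i ∈ s, a i ^ q) ^ (1/q) ∧
      (∑ i ∈ s, a i ^ q) ^ (1/q) ≤ (∑ i ∈ s, a i ^ p) ^ (1/p) ∧
      (s.card : ℝ) ^ (1/q) * ((s.card : ℝ)⁻¹ * ∑ i ∈ s, a i ^ q) ^ (1/q)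
        = (∑ i ∈ s, a i ^ q) ^ (1/q) := by
  have hq : 1 ≤ q := hp.trans hpq
  have hp0 : (0:ℝ) < p := lt_of_lt_of_le one_pos hp
  have hq0 : (0:ℝ) < q := lt_of_lt_of_le one_pos hq
  set N : ℝ := (s.card : ℝ) with hNdef
  have hN : 0 < N := Nat.cast_pos.2 (Finset.card_pos.2 hs)
  set Sp := ∑ i ∈ s, a i ^ p with hSp
  set Sq := ∑ i ∈ s, a i ^ q with hSq
  have hSp0 : 0 ≤ Sp := Finset.sum_nonneg fun i _ => Real.rpow_nonneg (ha i) p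
  have hSq0 : 0 ≤ Sq := Finset.sum_nonneg fun i _ => Real.rpow_nonneg (ha i) q
  set M := s.sup' hs a with hMdef
  have hMle : ∀ i ∈ s, a i ≤ M := fun i hi => Finset.le_sup' a hi
  obtain ⟨i0, hi0, hMi0⟩ := Finset.exists_mem_eq_sup' hs a
  have hM0 : 0 ≤ M := le_trans (ha i0) (hMle i0 hi0)
  have hqp1 : 1 ≤ q / p := (one_le_div hp0).2 hpq
  have hpow : ∀ i, (a i ^ p) ^ (q / p) = a i ^ q := fun i => by
    rw [← Real.rpow_mul (ha i), mul_div_cancel₀ q hp0.ne']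
  have f1 : (N⁻¹ * Sp) ^ (1/p) ≤ (N⁻¹ * Sq) ^ (1/q) := by
    have jensen := Real.rpow_arith_mean_le_arith_mean_rpow s (fun _ => N⁻¹)
      (fun i => a i ^ p) (fun i _ => by positivity)
      (by rw [Finset.sum_const, nsmul_eq_mul, ← hNdef, mul_inv_cancel₀ hN.ne'])
      (fun i _ => Real.rpow_nonneg (ha i) p) hqp1
    simp only [hpow] at jensen
    rw [← Finset.mul_sum, ← Finset.mul_sum, ← hSp, ← hSq] at jensen
    have := Real.rpow_le_rpow (Real.rpow_nonneg (by positivity) _) jensen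
      (le_of_lt (by positivity : (0:ℝ) < 1/q))
    have hexp : q / p * (1 / q) = 1 / p := by field_simp
    rwa [← Real.rpow_mul (by positivity), hexp] at this
  have f2 : (N⁻¹ * Sq) ^ (1/q) ≤ M := by
    have hsum : Sq ≤ N * M ^ q := by
      rw [hSq]
      calc ∑ i ∈ s, a i ^ q ≤ ∑ _i ∈ s, M ^ q :=
            Finset.sum_le_sum fun i hi => Real.rpow_le_rpow (ha i) (hMle i hi) hq0.le
        _ = N * M ^ q := by rw [Finset.sum_const, nsmul_eq_mul]
    have h2 : N⁻¹ * Sq ≤ M ^ q := by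
      rw [inv_mul_le_iff₀ hN]
      exact hsum.trans_eq rfl
    calc (N⁻¹ * Sq) ^ (1/q) ≤ (M ^ q) ^ (1/q) :=
          Real.rpow_le_rpow (by positivity) h2 (by positivity)
      _ = M := by rw [← Real.rpow_mul hM0, mul_one_div, div_self hq0.ne', Real.rpow_one]
  have f3 : M ≤ Sq ^ (1/q) := by
    have h1 : a i0 ^ q ≤ Sq :=
      Finset.single_le_sum (fun i _ => Real.rpow_nonneg (ha i) q) hi0
    have h2 : M ^ q ≤ Sq := by rw [hMdef, hMi0]; exact h1
    calc M = (M ^ q) ^ (1/q) := by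
          rw [← Real.rpow_mul hM0, mul_one_div, div_self hq0.ne', Real.rpow_one]
      _ ≤ Sq ^ (1/q) := Real.rpow_le_rpow (by positivity) h2 (by positivity)
  have f4 : Sq ^ (1/q) ≤ Sp ^ (1/p) := by
    have h1 : Sq ≤ Sp ^ (q/p) := by
      have := sum_rpow_le_rpow_sum_aux s (fun i => a i ^ p)
        (fun i _ => Real.rpow_nonneg (ha i) p) hqp1
      simp only [hpow] at this
      rwa [← hSp, ← hSq] at this
    calc Sq ^ (1/q) ≤ (Sp ^ (q/p)) ^ (1/q) :=
          Real.rpow_le_rpow hSq0 h1 (by positivity)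
      _ = Sp ^ (1/p) := by
          have hexp : q / p * (1 / q) = 1 / p := by field_simp
          rw [← Real.rpow_mul hSp0, hexp]
  have f5 : N ^ (1/q) * (N⁻¹ * Sq) ^ (1/q) = Sq ^ (1/q) := by
    rw [← Real.mul_rpow hN.le (by positivity), ← mul_assoc, mul_inv_cancel₀ hN.ne', one_mul]
  exact ⟨f1, f2, f3, f4, f5⟩

lemma chain_exists {V E : Type*} [Nonempty V] (src tgt : E → V)
    (hconn : ∀ u w : V, ∃ (k : ℕ) (_ : 0 < k) (e : Fin k → E), IsArcChain src tgt e ∧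
      src (e ⟨0, ‹0 < k›⟩) = u ∧ tgt (e ⟨k - 1, Nat.sub_lt ‹0 < k› Nat.one_pos⟩) = w) :
    ∀ k : ℕ, ∃ e : Fin k → E, IsArcChain src tgt e := by
  have succ : ∀ k : ℕ, ∃ e : Fin (k + 1) → E, IsArcChain src tgt e := by
    intro k
    induction k with
    | zero =>
      obtain ⟨k', hk', e', _, _, _⟩ :=
        hconn (Classical.arbitrary V) (Classical.arbitrary V)
      exact ⟨fun _ => e' ⟨0, hk'⟩, fun i j hij => by omega⟩
    | succ k ih =>
      obtain ⟨e, he⟩ := ih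
      set v := tgt (e (Fin.last k)) with hv
      obtain ⟨k', hk', e', he', hsrc, _⟩ := hconn v v
      refine ⟨fun i => if h : (i : ℕ) < k + 1 then e ⟨i, h⟩ else e' ⟨0, hk'⟩, ?_⟩
      intro i j hij
      by_cases hj : (j : ℕ) < k + 1
      · have hi : (i : ℕ) < k + 1 := by omega
        simp only [dif_pos hi, dif_pos hj]
        exact he ⟨i, hi⟩ ⟨j, hj⟩ (by simpa using hij)
      · have hj' : (j : ℕ) = k + 1 := by omega
        have hi : (i : ℕ) < k + 1 := by omega
        have hik : (i : ℕ) = k := by omega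
        simp only [dif_pos hi, dif_neg hj]
        have hlast : (⟨(i : ℕ), hi⟩ : Fin (k + 1)) = Fin.last k := by
          ext; simp [hik]
        rw [hsrc, hv, hlast]
  intro k
  cases k with
  | zero => exact ⟨Fin.elim0, fun i _ _ => i.elim0⟩
  | succ k => exact succ k


set_option maxHeartbeats 1000000 in
/-- **Monotonicity and accuracy of the constrained `p`-radius.** For integers
`1 ≤ p ≤ q`, writing `ρ_p, ρ_q` for the constrained `p`- and `q`-radii, `ρ` for the
constrained joint spectral radius, and `ρ(A(G)) = lim |E_k|^{1/k}` for the spectral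
radius of the adjacency matrix of the (strongly connected) automaton:
`ρ_p ≤ ρ_q ≤ ρ ≤ ρ(A(G))^{1/q} ρ_q ≤ ρ(A(G))^{1/p} ρ_p`. -/
theorem p_radius_chain
    (n m : ℕ) {V : Type*} [Fintype V] [DecidableEq V] [Nonempty V]
    {E : Type*} [Fintype E] [DecidableEq E]
    (src tgt : E → V) (lab : E → Fin m)
    (A : Fin m → Matrix (Fin n) (Fin n) ℝ)
    (hconn : ∀ u w : V, ∃ (k : ℕ) (_ : 0 < k) (e : Fin k → E), IsArcChain src tgt e ∧
      src (e ⟨0, by omega⟩) = u ∧ tgt (e ⟨k - 1, by omega⟩) = w)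
    (p q : ℕ) (hp : 1 ≤ p) (hpq : p ≤ q)
    (Lp Lq L LA : ℝ)
    (hLp : Filter.Tendsto (pRadiusSeq src tgt lab A p) Filter.atTop (nhds Lp))
    (hLq : Filter.Tendsto (pRadiusSeq src tgt lab A q) Filter.atTop (nhds Lq))
    (hL : Filter.Tendsto (cjsrSeq src tgt lab A) Filter.atTop (nhds L))
    (hLA : Filter.Tendsto (fun k : ℕ =>
        (∑ e : Fin k → E, if IsArcChain src tgt e then (1 : ℝ) else 0) ^ (1 / (k : ℝ)))
      Filter.atTop (nhds LA)) :
    Lp ≤ Lq ∧ Lq ≤ L ∧ L ≤ LA ^ (1 / (q : ℝ)) * Lq ∧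
      LA ^ (1 / (q : ℝ)) * Lq ≤ LA ^ (1 / (p : ℝ)) * Lp := by
  have hq : 1 ≤ q := hp.trans hpq
  have hpR : (1:ℝ) ≤ (p:ℝ) := by exact_mod_cast hp
  have hqR : (1:ℝ) ≤ (q:ℝ) := by exact_mod_cast hq
  have hpqR : (p:ℝ) ≤ (q:ℝ) := by exact_mod_cast hpq
  have hp0 : (0:ℝ) < (p:ℝ) := lt_of_lt_of_le one_pos hpR
  have hq0 : (0:ℝ) < (q:ℝ) := lt_of_lt_of_le one_pos hqR
  -- per-k data
  set sk : ∀ k : ℕ, Finset (Fin k → E) :=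
    fun k => Finset.univ.filter (fun e => IsArcChain src tgt e) with hsk
  set ak : ∀ k : ℕ, (Fin k → E) → ℝ :=
    fun k e => ‖((List.ofFn fun i => A (lab (e i))).reverse).prod‖ with hak
  have hane : ∀ k (e : Fin k → E), 0 ≤ ak k e := fun k e => norm_nonneg _
  have hsne : ∀ k, (sk k).Nonempty := by
    intro k
    obtain ⟨e, he⟩ := chain_exists src tgt hconn k
    exact ⟨e, Finset.mem_filter.2 ⟨Finset.mem_univ _, he⟩⟩
  -- rewriting the indicator sums
  have hNsum : ∀ k : ℕ,
      (∑ e : Fin k → E, if IsArcChain src tgt e then (1:ℝ) else 0) = ((sk k).card : ℝ) := by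
    intro k
    rw [Finset.sum_boole]
  have hSsum : ∀ (k : ℕ) (r : ℝ),
      (∑ e : Fin k → E, if IsArcChain src tgt e then ak k e ^ r else 0)
        = ∑ e ∈ sk k, ak k e ^ r := by
    intro k r
    rw [hsk, Finset.sum_filter]
  -- bridge: the p-radius sequence in terms of the filtered sum
  have bridge : ∀ (r : ℕ), 1 ≤ r → ∀ k : ℕ,
      pRadiusSeq src tgt lab A r k
        = ((((sk k).card : ℝ)⁻¹ * ∑ e ∈ sk k, ak k e ^ (r:ℝ)) ^ (1/(r:ℝ))) ^ (1/(k:ℝ)) := by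
    intro r hr k
    have hr0 : (0:ℝ) < (r:ℝ) := by exact_mod_cast hr
    unfold pRadiusSeq
    rw [hNsum k, hSsum k]
    rw [← Real.rpow_mul (by positivity)]
    congr 1
    ring
  -- the RHS identity used for the last two inequalities
  have geq : ∀ (r : ℕ), 1 ≤ r → ∀ k : ℕ,
      ((∑ e : Fin k → E, if IsArcChain src tgt e then (1:ℝ) else 0) ^ (1/(k:ℝ))) ^ (1/(r:ℝ))
          * pRadiusSeq src tgt lab A r k
        = ((∑ e ∈ sk k, ak k e ^ (r:ℝ)) ^ (1/(r:ℝ))) ^ (1/(k:ℝ)) := by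
    intro r hr k
    have hr0 : (0:ℝ) < (r:ℝ) := by exact_mod_cast hr
    have hN : (0:ℝ) < ((sk k).card : ℝ) := Nat.cast_pos.2 (Finset.card_pos.2 (hsne k))
    have hsum0 : (0:ℝ) ≤ ((sk k).card : ℝ)⁻¹ * ∑ e ∈ sk k, ak k e ^ (r:ℝ) := by
      exact mul_nonneg (inv_nonneg.2 (Nat.cast_nonneg _))
        (Finset.sum_nonneg fun e _ => Real.rpow_nonneg (hane k e) _)
    rw [hNsum k, bridge r hr k]
    rw [← Real.rpow_mul hN.le, mul_comm (1/(k:ℝ)) (1/(r:ℝ)), Real.rpow_mul hN.le]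
    rw [← Real.mul_rpow (Real.rpow_nonneg hN.le _) (Real.rpow_nonneg hsum0 _)]
    rw [← Real.mul_rpow hN.le hsum0, ← mul_assoc, mul_inv_cancel₀ hN.ne', one_mul]
  -- pointwise inequalities for k ≥ 1
  have I1 : ∀ k : ℕ, 1 ≤ k →
      pRadiusSeq src tgt lab A p k ≤ pRadiusSeq src tgt lab A q k := by
    intro k hk
    obtain ⟨f1, -, -, -, -⟩ := pRadius_master (sk k) (hsne k) (ak k) (hane k) hpR hpqR
    rw [bridge p hp k, bridge q hq k]
    have h1 : (0:ℝ) ≤ (((sk k).card : ℝ)⁻¹ * ∑ e ∈ sk k, ak k e ^ (p:ℝ)) ^ (1/(p:ℝ)) :=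
      Real.rpow_nonneg (mul_nonneg (inv_nonneg.2 (Nat.cast_nonneg _))
        (Finset.sum_nonneg fun e _ => Real.rpow_nonneg (hane k e) _)) _
    exact Real.rpow_le_rpow h1 f1 (by positivity)
  have I2 : ∀ k : ℕ, 1 ≤ k →
      pRadiusSeq src tgt lab A q k ≤ cjsrSeq src tgt lab A k := by
    intro k hk
    obtain ⟨-, f2, -, -, -⟩ := pRadius_master (sk k) (hsne k) (ak k) (hane k) hpR hpqR
    have hMle : ∀ e : Fin k → E, IsArcChain src tgt e →
        ak k e ≤ (sk k).sup' (hsne k) (ak k) := fun e he =>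
      Finset.le_sup' (ak k) (Finset.mem_filter.2 ⟨Finset.mem_univ _, he⟩)
    obtain ⟨e0, he0, hMe0⟩ := Finset.exists_mem_eq_sup' (hsne k) (ak k)
    have he0c : IsArcChain src tgt e0 := (Finset.mem_filter.1 he0).2
    have hmem : (sk k).sup' (hsne k) (ak k) ^ (1/(k:ℝ)) ∈ {r : ℝ | ∃ e : Fin k → E,
        IsArcChain src tgt e ∧
        r = ‖((List.ofFn fun i => A (lab (e i))).reverse).prod‖ ^ (1 / (k : ℝ))} :=
      ⟨e0, he0c, by rw [hMe0]⟩
    have hbdd : BddAbove {r : ℝ | ∃ e : Fin k → E, IsArcChain src tgt e ∧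
        r = ‖((List.ofFn fun i => A (lab (e i))).reverse).prod‖ ^ (1 / (k : ℝ))} := by
      refine ⟨(sk k).sup' (hsne k) (ak k) ^ (1/(k:ℝ)), ?_⟩
      rintro r ⟨e, hec, rfl⟩
      exact Real.rpow_le_rpow (norm_nonneg _) (hMle e hec) (by positivity)
    have step : pRadiusSeq src tgt lab A q k ≤ (sk k).sup' (hsne k) (ak k) ^ (1/(k:ℝ)) := by
      rw [bridge q hq k]
      have h1 : (0:ℝ) ≤ ((sk k).card : ℝ)⁻¹ * ∑ e ∈ sk k, ak k e ^ (q:ℝ) :=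
        mul_nonneg (inv_nonneg.2 (Nat.cast_nonneg _))
          (Finset.sum_nonneg fun e _ => Real.rpow_nonneg (hane k e) _)
      exact Real.rpow_le_rpow (Real.rpow_nonneg h1 _) f2 (by positivity)
    exact step.trans (le_csSup hbdd hmem)
  have I3 : ∀ k : ℕ, 1 ≤ k → cjsrSeq src tgt lab A k ≤
      ((∑ e : Fin k → E, if IsArcChain src tgt e then (1:ℝ) else 0) ^ (1/(k:ℝ))) ^ (1/(q:ℝ))
        * pRadiusSeq src tgt lab A q k := by
    intro k hk
    obtain ⟨-, -, f3, -, -⟩ := pRadius_master (sk k) (hsne k) (ak k) (hane k) hpR hpqR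
    rw [geq q hq k]
    obtain ⟨e0, he0, hMe0⟩ := Finset.exists_mem_eq_sup' (hsne k) (ak k)
    have he0c : IsArcChain src tgt e0 := (Finset.mem_filter.1 he0).2
    refine csSup_le ⟨_, e0, he0c, rfl⟩ ?_
    rintro r ⟨e, hec, rfl⟩
    have h1 : ak k e ≤ (∑ e ∈ sk k, ak k e ^ (q:ℝ)) ^ (1/(q:ℝ)) :=
      le_trans (Finset.le_sup' (ak k) (Finset.mem_filter.2 ⟨Finset.mem_univ _, hec⟩)) f3
    exact Real.rpow_le_rpow (norm_nonneg _) h1 (by positivity)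
  have I4 : ∀ k : ℕ, 1 ≤ k →
      ((∑ e : Fin k → E, if IsArcChain src tgt e then (1:ℝ) else 0) ^ (1/(k:ℝ))) ^ (1/(q:ℝ))
          * pRadiusSeq src tgt lab A q k ≤
        ((∑ e : Fin k → E, if IsArcChain src tgt e then (1:ℝ) else 0) ^ (1/(k:ℝ))) ^ (1/(p:ℝ))
          * pRadiusSeq src tgt lab A p k := by
    intro k hk
    obtain ⟨-, -, -, f4, -⟩ := pRadius_master (sk k) (hsne k) (ak k) (hane k) hpR hpqR
    rw [geq q hq k, geq p hp k]
    have h1 : (0:ℝ) ≤ (∑ e ∈ sk k, ak k e ^ (q:ℝ)) ^ (1/(q:ℝ)) :=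
      Real.rpow_nonneg
        (Finset.sum_nonneg fun e _ => Real.rpow_nonneg (hane k e) _) _
    exact Real.rpow_le_rpow h1 f4 (by positivity)
  -- limits
  have tq : Filter.Tendsto (fun k : ℕ =>
      ((∑ e : Fin k → E, if IsArcChain src tgt e then (1:ℝ) else 0) ^ (1/(k:ℝ))) ^ (1/(q:ℝ))
        * pRadiusSeq src tgt lab A q k) Filter.atTop (nhds (LA ^ (1/(q:ℝ)) * Lq)) :=
    (hLA.rpow_const (Or.inr (by positivity))).mul hLq
  have tp : Filter.Tendsto (fun k : ℕ =>
      ((∑ e : Fin k → E, if IsArcChain src tgt e then (1:ℝ) else 0) ^ (1/(k:ℝ))) ^ (1/(p:ℝ))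
        * pRadiusSeq src tgt lab A p k) Filter.atTop (nhds (LA ^ (1/(p:ℝ)) * Lp)) :=
    (hLA.rpow_const (Or.inr (by positivity))).mul hLp
  refine ⟨le_of_tendsto_of_tendsto hLp hLq (Filter.eventually_atTop.2 ⟨1, I1⟩),
    le_of_tendsto_of_tendsto hLq hL (Filter.eventually_atTop.2 ⟨1, I2⟩),
    le_of_tendsto_of_tendsto hL tq (Filter.eventually_atTop.2 ⟨1, I3⟩),
    le_of_tendsto_of_tendsto tq tp (Filter.eventually_atTop.2 ⟨1, I4⟩)⟩
end
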